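/- arXiv:1401.0776 — 4 statements merged into one kernel-verified Lean document; each statement's English description precedes it below -/
import Mathlib

section
/- Let p be a prime and let A be a subgroup of SL(2, ℤ/pℤ) that contains at least two distinct Sylow p-subgroups of SL(2, ℤ/pℤ) (equivalently, two distinct subgroups of order p). Then A = SL(2, ℤ/pℤ). -/
open Matrix

section
variable {p : ℕ} [Fact p.Prime]

private def uu (p : ℕ) [Fact p.Prime] (t : ZMod p) : Matrix.SpecialLinearGroup (Fin 2) (ZMod p) :=
  ⟨!![1, t; 0, 1], by simp [Matrix.det_fin_two_of]⟩

private def ll (p : ℕ) [Fact p.Prime] (t : ZMod p) : Matrix.SpecialLinearGroup (Fin 2) (ZMod p) :=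
  ⟨!![1, 0; t, 1], by simp [Matrix.det_fin_two_of]⟩

private def NN (p : ℕ) [Fact p.Prime] (a c : ZMod p) : Matrix (Fin 2) (Fin 2) (ZMod p) :=
  !![-(a*c), a^2; -(c^2), a*c]

private lemma NN_smul (a c μ : ZMod p) : NN p (μ*a) (μ*c) = (μ^2) • NN p a c := by
  ext i j
  fin_cases i <;> fin_cases j <;> simp [NN] <;> ring

private lemma conj_uu (g : Matrix.SpecialLinearGroup (Fin 2) (ZMod p)) (t : ZMod p) :
    ((g * uu p t * g⁻¹ : Matrix.SpecialLinearGroup (Fin 2) (ZMod p)) : Matrix (Fin 2) (Fin 2) (ZMod p))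
      = 1 + t • NN p (g.1 0 0) (g.1 1 0) := by
  have hdet : g.1 0 0 * g.1 1 1 - g.1 0 1 * g.1 1 0 = 1 := by
    have := g.2; rwa [Matrix.det_fin_two] at this
  rw [Matrix.SpecialLinearGroup.coe_mul, Matrix.SpecialLinearGroup.coe_mul, Matrix.SpecialLinearGroup.coe_inv, Matrix.adjugate_fin_two]
  ext i j
  simp only [Matrix.SpecialLinearGroup.coe_mul, uu, NN]
  rw [Matrix.eta_fin_two g.1]
  fin_cases i <;> fin_cases j <;>
    simp [Matrix.mul_fin_two, Matrix.vecHead, Matrix.vecTail, Matrix.one_fin_two, Matrix.vecMul, dotProduct, Fin.sum_univ_two] <;>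
    first
    | linear_combination hdet
    | linear_combination -hdet
    | linear_combination t * hdet
    | linear_combination -t * hdet
    | ring

private lemma conj_ll (g : Matrix.SpecialLinearGroup (Fin 2) (ZMod p)) (t : ZMod p) :
    ((g * ll p t * g⁻¹ : Matrix.SpecialLinearGroup (Fin 2) (ZMod p)) : Matrix (Fin 2) (Fin 2) (ZMod p))
      = 1 + (-t) • NN p (g.1 0 1) (g.1 1 1) := by
  have hdet : g.1 0 0 * g.1 1 1 - g.1 0 1 * g.1 1 0 = 1 := by
    have := g.2; rwa [Matrix.det_fin_two] at this
  rw [Matrix.SpecialLinearGroup.coe_mul, Matrix.SpecialLinearGroup.coe_mul, Matrix.SpecialLinearGroup.coe_inv, Matrix.adjugate_fin_two]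
  ext i j
  simp only [Matrix.SpecialLinearGroup.coe_mul, ll, NN]
  rw [Matrix.eta_fin_two g.1]
  fin_cases i <;> fin_cases j <;>
    simp [Matrix.mul_fin_two, Matrix.vecHead, Matrix.vecTail, Matrix.one_fin_two, Matrix.vecMul, dotProduct, Fin.sum_univ_two] <;>
    first
    | linear_combination hdet
    | linear_combination -hdet
    | linear_combination t * hdet
    | linear_combination -t * hdet
    | ring
private def uHom (p : ℕ) [Fact p.Prime] :
    Multiplicative (ZMod p) →* Matrix.SpecialLinearGroup (Fin 2) (ZMod p) where
  toFun t := uu p t.toAdd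
  map_one' := by
    ext i j
    fin_cases i <;> fin_cases j <;> simp [uu, Matrix.one_fin_two]
  map_mul' s t := by
    ext i j
    rw [Matrix.SpecialLinearGroup.coe_mul]
    simp only [Matrix.SpecialLinearGroup.coe_mul, uu]
    fin_cases i <;> fin_cases j <;>
      (simp [Matrix.mul_fin_two, Matrix.vecHead, Matrix.vecTail, Matrix.vecMul,
        dotProduct, Fin.sum_univ_two]; try ring)

private lemma uHom_inj : Function.Injective (uHom p) := by
  intro s t h
  have := congrArg (fun g : Matrix.SpecialLinearGroup (Fin 2) (ZMod p) => g.1 0 1) h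
  exact this

private lemma card_uRange : Nat.card (uHom p).range = p := by
  rw [Nat.card_congr (MonoidHom.ofInjective (uHom_inj (p := p))).toEquiv.symm,
    Nat.card_congr Multiplicative.toAdd, Nat.card_zmod]


private lemma card_fact :
    (Nat.card (Matrix.SpecialLinearGroup (Fin 2) (ZMod p))).factorization p = 1 := by
  have hp := (Fact.out : p.Prime)
  have hpos : 0 < Nat.card (Matrix.SpecialLinearGroup (Fin 2) (ZMod p)) := Nat.card_pos
  have h1 : p ∣ Nat.card (Matrix.SpecialLinearGroup (Fin 2) (ZMod p)) := by
    have := Subgroup.card_subgroup_dvd_card (uHom p).range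
    rwa [card_uRange] at this
  have h2 : ¬ p ^ 2 ∣ Nat.card (Matrix.SpecialLinearGroup (Fin 2) (ZMod p)) := by
    intro hdvd
    have hinj : Function.Injective
        (Matrix.SpecialLinearGroup.toGL :
          Matrix.SpecialLinearGroup (Fin 2) (ZMod p) →* GL (Fin 2) (ZMod p)) :=
      fun A B h => Subtype.ext (congrArg Units.val h)
    have hdvdGL : Nat.card (Matrix.SpecialLinearGroup (Fin 2) (ZMod p)) ∣
        Nat.card (GL (Fin 2) (ZMod p)) := by
      have := Subgroup.card_subgroup_dvd_card (Matrix.SpecialLinearGroup.toGL (n := Fin 2) (R := ZMod p)).range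
      rwa [Nat.card_congr (MonoidHom.ofInjective hinj).toEquiv.symm] at this
    have hGL : Nat.card (GL (Fin 2) (ZMod p)) = (p ^ 2 - 1) * (p ^ 2 - p) := by
      rw [Matrix.card_GL_field]
      simp [Fin.prod_univ_two, ZMod.card]
    have hsub : p ^ 2 - p = p * (p - 1) := by
      obtain ⟨k, rfl⟩ : ∃ k, p = k + 1 := ⟨p - 1, by have := hp.two_le; omega⟩
      have hh : (k + 1) ^ 2 = (k + 1) * k + (k + 1) := by ring
      simp only [Nat.add_sub_cancel]
      omega
    have hfin : p ^ 2 ∣ (p ^ 2 - 1) * (p * (p - 1)) := by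
      rw [← hsub, ← hGL]
      exact hdvd.trans hdvdGL
    have h2le := hp.two_le
    have hcop1 : ¬ p ∣ p ^ 2 - 1 := by
      intro h
      have hd : p ∣ p ^ 2 - (p ^ 2 - 1) := Nat.dvd_sub (dvd_pow_self p two_ne_zero) h
      have h1le : 1 ≤ p ^ 2 := Nat.one_le_pow _ _ (by omega)
      rw [show p ^ 2 - (p ^ 2 - 1) = 1 by omega] at hd
      exact absurd (Nat.le_of_dvd one_pos hd) (by omega)
    have hcop2 : ¬ p ∣ p - 1 := by
      intro h
      have hd : p ∣ p - (p - 1) := Nat.dvd_sub dvd_rfl h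
      rw [show p - (p - 1) = 1 by omega] at hd
      exact absurd (Nat.le_of_dvd one_pos hd) (by omega)
    have hmul : p * p ∣ p * ((p ^ 2 - 1) * (p - 1)) := by
      have heq : (p ^ 2 - 1) * (p * (p - 1)) = p * ((p ^ 2 - 1) * (p - 1)) := by ring
      rw [← heq, ← sq]
      exact hfin
    have hdvdN : p ∣ (p ^ 2 - 1) * (p - 1) := (Nat.mul_dvd_mul_iff_left hp.pos).mp hmul
    rcases (Nat.Prime.dvd_mul hp).mp hdvdN with h | h
    exacts [hcop1 h, hcop2 h]
  have hne : Nat.card (Matrix.SpecialLinearGroup (Fin 2) (ZMod p)) ≠ 0 := hpos.ne'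
  have hle1 : 1 ≤ (Nat.card (Matrix.SpecialLinearGroup (Fin 2) (ZMod p))).factorization p := by
    rw [← hp.pow_dvd_iff_le_factorization hne, pow_one]
    exact h1
  have hlt : ¬ 2 ≤ (Nat.card (Matrix.SpecialLinearGroup (Fin 2) (ZMod p))).factorization p := by
    rw [← hp.pow_dvd_iff_le_factorization hne]
    exact h2
  omega

private lemma struct (P : Subgroup (Matrix.SpecialLinearGroup (Fin 2) (ZMod p)))
    (hP : Nat.card P = p) :
    ∃ a c : ZMod p, (a ≠ 0 ∨ c ≠ 0) ∧ ∀ x : Matrix.SpecialLinearGroup (Fin 2) (ZMod p),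
      x ∈ P ↔ ∃ t : ZMod p, (x : Matrix (Fin 2) (Fin 2) (ZMod p)) = 1 + t • NN p a c := by
  have hU : Nat.card (uHom p).range =
      p ^ (Nat.card (Matrix.SpecialLinearGroup (Fin 2) (ZMod p))).factorization p := by
    rw [card_fact, pow_one, card_uRange]
  have hP' : Nat.card P =
      p ^ (Nat.card (Matrix.SpecialLinearGroup (Fin 2) (ZMod p))).factorization p := by
    rw [card_fact, pow_one, hP]
  obtain ⟨g, hg⟩ := MulAction.exists_smul_eq (Matrix.SpecialLinearGroup (Fin 2) (ZMod p))
    (Sylow.ofCard _ hU) (Sylow.ofCard P hP')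
  have hdetg : g.1 0 0 * g.1 1 1 - g.1 0 1 * g.1 1 0 = 1 := by
    have := g.2; rwa [Matrix.det_fin_two] at this
  refine ⟨g.1 0 0, g.1 1 0, ?_, ?_⟩
  · by_contra h
    push_neg at h
    rw [h.1, h.2] at hdetg
    simp at hdetg
  · intro x
    have hmem : x ∈ P ↔ g⁻¹ * x * g ∈ (uHom p).range := by
      conv_lhs => rw [show P = ((Sylow.ofCard P hP' : Sylow p _) : Subgroup _) from rfl, ← hg]
      rw [Sylow.coe_subgroup_smul, Subgroup.mem_pointwise_smul_iff_inv_smul_mem]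
      simp only [MulAut.smul_def, MulAut.inv_def, MulAut.conj_symm_apply]
      rfl
    have hr : ∀ z : Matrix.SpecialLinearGroup (Fin 2) (ZMod p),
        z ∈ (uHom p).range ↔ ∃ t : ZMod p, z = uu p t := by
      intro z
      constructor
      · rintro ⟨y, rfl⟩; exact ⟨y.toAdd, rfl⟩
      · rintro ⟨t, rfl⟩; exact ⟨Multiplicative.ofAdd t, rfl⟩
    rw [hmem, hr]
    constructor
    · rintro ⟨t, ht⟩
      refine ⟨t, ?_⟩
      have hx : x = g * uu p t * g⁻¹ := by rw [← ht]; group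
      rw [hx, conj_uu]
    · rintro ⟨t, ht⟩
      refine ⟨t, ?_⟩
      have hx : x = g * uu p t * g⁻¹ := by
        apply Subtype.coe_injective
        show (x : Matrix (Fin 2) (Fin 2) (ZMod p)) =
          ((g * uu p t * g⁻¹ : Matrix.SpecialLinearGroup (Fin 2) (ZMod p)) :
            Matrix (Fin 2) (Fin 2) (ZMod p))
        rw [conj_uu]; exact ht
      rw [hx]; group

private lemma gen_lemma (H : Subgroup (Matrix.SpecialLinearGroup (Fin 2) (ZMod p)))
    (hu : ∀ t, uu p t ∈ H) (hl : ∀ t, ll p t ∈ H) : H = ⊤ := by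
  have key : ∀ g : Matrix.SpecialLinearGroup (Fin 2) (ZMod p), g.1 1 0 ≠ 0 → g ∈ H := by
    intro g hc
    have hdet : g.1 0 0 * g.1 1 1 - g.1 0 1 * g.1 1 0 = 1 := by
      have := g.2; rwa [Matrix.det_fin_two] at this
    have hg : g = uu p ((g.1 0 0 - 1) / g.1 1 0) * ll p (g.1 1 0) *
        uu p ((g.1 1 1 - 1) / g.1 1 0) := by
      ext i j
      rw [Matrix.SpecialLinearGroup.coe_mul, Matrix.SpecialLinearGroup.coe_mul]
      simp only [Matrix.SpecialLinearGroup.coe_mul, uu, ll]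
      rw [Matrix.eta_fin_two g.1]
      fin_cases i <;> fin_cases j <;>
        simp [Matrix.mul_fin_two, Matrix.vecHead, Matrix.vecTail] <;>
        field_simp <;> ring_nf <;>
        first
        | rfl
        | linear_combination hdet
        | linear_combination -hdet
    rw [hg]
    exact mul_mem (mul_mem (hu _) (hl _)) (hu _)
  rw [Subgroup.eq_top_iff']
  intro g
  by_cases hc : g.1 1 0 = 0
  · have hg' : (ll p 1 * g).1 1 0 ≠ 0 := by
      have hdet : g.1 0 0 * g.1 1 1 - g.1 0 1 * g.1 1 0 = 1 := by
        have := g.2; rwa [Matrix.det_fin_two] at this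
      rw [Matrix.SpecialLinearGroup.coe_mul]
      simp only [Matrix.SpecialLinearGroup.coe_mul, ll]
      rw [Matrix.eta_fin_two g.1]
      simp [Matrix.mul_fin_two]
      intro h0
      rw [hc, add_zero] at h0
      rw [h0, hc] at hdet
      simp at hdet
    have := key _ hg'
    have : (ll p 1)⁻¹ * (ll p 1 * g) ∈ H := mul_mem (inv_mem (hl 1)) this
    rwa [inv_mul_cancel_left] at this
  · exact key g hc

private lemma prop_of_det_zero {a c a' c' : ZMod p} (h : a * c' - a' * c = 0)
    (h1 : a ≠ 0 ∨ c ≠ 0) (h2 : a' ≠ 0 ∨ c' ≠ 0) :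
    ∃ μ : ZMod p, μ ≠ 0 ∧ a' = μ * a ∧ c' = μ * c := by
  rcases eq_or_ne a 0 with ha | ha
  · have hc : c ≠ 0 := by tauto
    have ha' : a' = 0 := by
      have h0 : a' * c = 0 := by linear_combination c' * ha - h
      rcases mul_eq_zero.mp h0 with h' | h'
      exacts [h', absurd h' hc]
    have hc' : c' ≠ 0 := by tauto
    exact ⟨c' / c, div_ne_zero hc' hc, by rw [ha, ha', mul_zero], by field_simp⟩
  · have ha'0 : a' ≠ 0 := by
      intro h0
      have hc' : c' = 0 := by
        have h0' : a * c' = 0 := by linear_combination h + c * h0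
        rcases mul_eq_zero.mp h0' with h' | h'
        exacts [absurd h' ha, h']
      rcases h2 with h2 | h2
      exacts [h2 h0, h2 hc']
    refine ⟨a' / a, div_ne_zero ha'0 ha, by field_simp, ?_⟩
    field_simp
    linear_combination h

end

theorem stmt16 (p : ℕ) [Fact p.Prime]
    (A P Q : Subgroup (Matrix.SpecialLinearGroup (Fin 2) (ZMod p)))
    (hPQ : P ≠ Q) (hP : Nat.card ↥P = p) (hQ : Nat.card ↥Q = p)
    (hPA : P ≤ A) (hQA : Q ≤ A) : A = ⊤ := by
  obtain ⟨a, c, h1, hPc⟩ := struct P hP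
  obtain ⟨a', c', h2, hQc⟩ := struct Q hQ
  set D := a * c' - a' * c with hD
  have hDne : D ≠ 0 := by
    intro h0
    apply hPQ
    obtain ⟨μ, hμ, ha', hc'⟩ := prop_of_det_zero h0 h1 h2
    ext x
    rw [hPc, hQc]
    constructor
    · rintro ⟨t, ht⟩
      refine ⟨t / μ ^ 2, ?_⟩
      rw [ha', hc', NN_smul, smul_smul, div_mul_cancel₀ _ (pow_ne_zero 2 hμ)]
      exact ht
    · rintro ⟨t, ht⟩
      refine ⟨t * μ ^ 2, ?_⟩
      rw [ht, ha', hc', NN_smul, smul_smul]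
  have hdetE : a * (c' / D) - a' / D * c = 1 := by
    field_simp
    exact hD.symm
  obtain ⟨e, he⟩ : ∃ e : Matrix.SpecialLinearGroup (Fin 2) (ZMod p),
      (e : Matrix (Fin 2) (Fin 2) (ZMod p)) = !![a, a' / D; c, c' / D] :=
    ⟨⟨_, by rw [Matrix.det_fin_two_of]; exact hdetE⟩, rfl⟩
  have h00 : e.1 0 0 = a := by rw [he]; simp
  have h10 : e.1 1 0 = c := by rw [he]; simp
  have h01 : e.1 0 1 = a' / D := by rw [he]; simp
  have h11 : e.1 1 1 = c' / D := by rw [he]; simp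
  set H := Subgroup.comap (MulAut.conj e).toMonoidHom A with hHdef
  have hu : ∀ t, uu p t ∈ H := by
    intro t
    simp only [hHdef, Subgroup.mem_comap, MulEquiv.coe_toMonoidHom, MulAut.conj_apply]
    apply hPA
    rw [hPc]
    exact ⟨t, by rw [conj_uu, h00, h10]⟩
  have hl : ∀ t, ll p t ∈ H := by
    intro t
    simp only [hHdef, Subgroup.mem_comap, MulEquiv.coe_toMonoidHom, MulAut.conj_apply]
    apply hQA
    rw [hQc]
    refine ⟨-t / D ^ 2, ?_⟩
    have hNN : NN p (a' / D) (c' / D) = (D⁻¹) ^ 2 • NN p a' c' := by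
      have h' := NN_smul (p := p) a' c' D⁻¹
      rw [inv_mul_eq_div, inv_mul_eq_div] at h'
      exact h'
    rw [conj_ll, h01, h11, hNN, smul_smul]
    congr 1
    field_simp
  have hH : H = ⊤ := gen_lemma H hu hl
  rw [Subgroup.eq_top_iff']
  intro x
  have hx : e⁻¹ * x * e ∈ H := by rw [hH]; trivial
  have hx' := Subgroup.mem_comap.mp hx
  simp only [MulEquiv.coe_toMonoidHom, MulAut.conj_apply] at hx'
  rwa [show e * (e⁻¹ * x * e) * e⁻¹ = x by group] at hx'
end

section
/- Let p be a prime and m a positive integer. Then the smallest normal subgroup of SL(2, ℤ) containing Γ(mp) and T^m equals Γ(m), where T = [[1,1],[0,1]]. -/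
namespace Stmt17Aux
open CongruenceSubgroup Matrix Matrix.SpecialLinearGroup Subgroup
open scoped MatrixGroups
noncomputable section

lemma castzero {n : ℕ} {x : ℤ} (h : (n:ℤ) ∣ x) : ((x:ℤ) : ZMod n) = 0 :=
  (ZMod.intCast_zmod_eq_zero_iff_dvd x n).mpr h

lemma castone {n : ℕ} {x : ℤ} (h : (n:ℤ) ∣ x - 1) : ((x:ℤ) : ZMod n) = 1 := by
  have := castzero h; push_cast at this; linear_combination this

lemma dvd_of_castzero {n : ℕ} {x : ℤ} (h : ((x:ℤ) : ZMod n) = 0) : (n:ℤ) ∣ x :=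
  (ZMod.intCast_zmod_eq_zero_iff_dvd x n).mp h

lemma dvd_of_castone {n : ℕ} {x : ℤ} (h : ((x:ℤ) : ZMod n) = 1) : (n:ℤ) ∣ x - 1 := by
  apply dvd_of_castzero; push_cast; linear_combination h

lemma exists_solve (p : ℕ) [Fact p.Prime] (α c : ZMod p) (hα : α ≠ 0) :
    ∃ t : ℤ, (t : ZMod p) * α = c := by
  obtain ⟨t, ht⟩ : ∃ t : ℤ, (t : ZMod p) = c * α⁻¹ := ⟨((c*α⁻¹).val : ℤ), by simp⟩
  exact ⟨t, by rw [ht, mul_assoc, inv_mul_cancel₀ hα, mul_one]⟩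

variable (m : ℕ)
def Tz (t : ℤ) : SL(2, ℤ) := ModularGroup.T ^ ((m:ℤ) * t)
lemma coe_Tz (t : ℤ) : (Tz m t : Matrix (Fin 2) (Fin 2) ℤ) = !![1, (m:ℤ)*t; 0, 1] :=
  ModularGroup.coe_T_zpow _
def gS : SL(2, ℤ) := ModularGroup.S
def Lz (t : ℤ) : SL(2, ℤ) := gS * Tz m t * gS⁻¹
lemma coe_Lz (t : ℤ) : (Lz m t : Matrix (Fin 2) (Fin 2) ℤ) = !![1, 0; -((m:ℤ)*t), 1] := by
  rw [Lz, Matrix.SpecialLinearGroup.coe_mul, Matrix.SpecialLinearGroup.coe_mul, coe_Tz, SL2_inv_expl]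
  simp [gS, ModularGroup.coe_S]
  ext i j
  fin_cases i <;> fin_cases j <;> erw [Matrix.mul_apply] <;> simp [Matrix.vecMul, dotProduct, Fin.sum_univ_two]
def gG : SL(2, ℤ) := ⟨!![1, 0; 1, 1], by norm_num [Matrix.det_fin_two_of]⟩
def Vz (t : ℤ) : SL(2, ℤ) := gG * Tz m t * gG⁻¹
lemma coe_Vz (t : ℤ) :
    (Vz m t : Matrix (Fin 2) (Fin 2) ℤ) = !![1 - (m:ℤ)*t, (m:ℤ)*t; -((m:ℤ)*t), 1 + (m:ℤ)*t] := by
  rw [Vz, Matrix.SpecialLinearGroup.coe_mul, Matrix.SpecialLinearGroup.coe_mul, coe_Tz, SL2_inv_expl]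
  simp [gG]
  ext i j
  fin_cases i <;> fin_cases j <;> erw [Matrix.mul_apply] <;> simp [Matrix.vecMul, dotProduct, Fin.sum_univ_two] <;> ring
variable {H : Subgroup SL(2, ℤ)}
lemma Tz_mem (h2 : ModularGroup.T ^ m ∈ H) (t : ℤ) : Tz m t ∈ H := by
  rw [Tz, _root_.zpow_mul, zpow_natCast]
  exact zpow_mem h2 t
lemma Lz_mem (hH : H.Normal) (h2 : ModularGroup.T ^ m ∈ H) (t : ℤ) : Lz m t ∈ H :=
  hH.conj_mem _ (Tz_mem m h2 t) _
lemma Vz_mem (hH : H.Normal) (h2 : ModularGroup.T ^ m ∈ H) (t : ℤ) : Vz m t ∈ H :=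
  hH.conj_mem _ (Tz_mem m h2 t) _
lemma mul_entries (X B : SL(2, ℤ)) :
    (X * B) 0 0 = X 0 0 * B 0 0 + X 0 1 * B 1 0 ∧
    (X * B) 0 1 = X 0 0 * B 0 1 + X 0 1 * B 1 1 ∧
    (X * B) 1 0 = X 1 0 * B 0 0 + X 1 1 * B 1 0 ∧
    (X * B) 1 1 = X 1 0 * B 0 1 + X 1 1 * B 1 1 := by
  simpa using Matrix.two_mul_expl (X : Matrix (Fin 2) (Fin 2) ℤ) (B : Matrix (Fin 2) (Fin 2) ℤ)
lemma det_entries (B : SL(2, ℤ)) : B 0 0 * B 1 1 - B 0 1 * B 1 0 = 1 := by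
  have := B.property
  rw [Matrix.det_fin_two] at this
  exact this
lemma entries_of_coe {X : SL(2, ℤ)} {x00 x01 x10 x11 : ℤ}
    (h : (X : Matrix (Fin 2) (Fin 2) ℤ) = !![x00, x01; x10, x11]) :
    X 0 0 = x00 ∧ X 0 1 = x01 ∧ X 1 0 = x10 ∧ X 1 1 = x11 := by
  refine ⟨?_, ?_, ?_, ?_⟩ <;> · show (X : Matrix (Fin 2) (Fin 2) ℤ) _ _ = _; rw [h]; simp
lemma Lz_mul (t : ℤ) (B : SL(2, ℤ)) :
    (Lz m t * B) 0 0 = B 0 0 ∧ (Lz m t * B) 0 1 = B 0 1 ∧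
    (Lz m t * B) 1 0 = B 1 0 - (m:ℤ)*t * B 0 0 ∧
    (Lz m t * B) 1 1 = B 1 1 - (m:ℤ)*t * B 0 1 := by
  obtain ⟨e1, e2, e3, e4⟩ := mul_entries (Lz m t) B
  obtain ⟨l1, l2, l3, l4⟩ := entries_of_coe (coe_Lz m t)
  rw [e1, e2, e3, e4, l1, l2, l3, l4]
  refine ⟨by ring, by ring, by ring, by ring⟩
lemma Tz_mul (t : ℤ) (B : SL(2, ℤ)) :
    (Tz m t * B) 0 0 = B 0 0 + (m:ℤ)*t * B 1 0 ∧ (Tz m t * B) 0 1 = B 0 1 + (m:ℤ)*t * B 1 1 ∧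
    (Tz m t * B) 1 0 = B 1 0 ∧ (Tz m t * B) 1 1 = B 1 1 := by
  obtain ⟨e1, e2, e3, e4⟩ := mul_entries (Tz m t) B
  obtain ⟨l1, l2, l3, l4⟩ := entries_of_coe (coe_Tz m t)
  rw [e1, e2, e3, e4, l1, l2, l3, l4]
  refine ⟨by ring, by ring, by ring, by ring⟩
lemma mul_Tz (t : ℤ) (B : SL(2, ℤ)) :
    (B * Tz m t) 0 0 = B 0 0 ∧ (B * Tz m t) 0 1 = (m:ℤ)*t * B 0 0 + B 0 1 ∧
    (B * Tz m t) 1 0 = B 1 0 ∧ (B * Tz m t) 1 1 = (m:ℤ)*t * B 1 0 + B 1 1 := by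
  obtain ⟨e1, e2, e3, e4⟩ := mul_entries B (Tz m t)
  obtain ⟨l1, l2, l3, l4⟩ := entries_of_coe (coe_Tz m t)
  rw [e1, e2, e3, e4, l1, l2, l3, l4]
  refine ⟨by ring, by ring, by ring, by ring⟩
lemma mul_Lz (t : ℤ) (B : SL(2, ℤ)) :
    (B * Lz m t) 0 0 = B 0 0 - (m:ℤ)*t * B 0 1 ∧ (B * Lz m t) 0 1 = B 0 1 ∧
    (B * Lz m t) 1 0 = B 1 0 - (m:ℤ)*t * B 1 1 ∧ (B * Lz m t) 1 1 = B 1 1 := by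
  obtain ⟨e1, e2, e3, e4⟩ := mul_entries B (Lz m t)
  obtain ⟨l1, l2, l3, l4⟩ := entries_of_coe (coe_Lz m t)
  rw [e1, e2, e3, e4, l1, l2, l3, l4]
  refine ⟨by ring, by ring, by ring, by ring⟩
lemma Vz_mul (t : ℤ) (B : SL(2, ℤ)) :
    (Vz m t * B) 0 0 = (1 - (m:ℤ)*t) * B 0 0 + (m:ℤ)*t * B 1 0 ∧
    (Vz m t * B) 0 1 = (1 - (m:ℤ)*t) * B 0 1 + (m:ℤ)*t * B 1 1 ∧
    (Vz m t * B) 1 0 = -((m:ℤ)*t) * B 0 0 + (1 + (m:ℤ)*t) * B 1 0 ∧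
    (Vz m t * B) 1 1 = -((m:ℤ)*t) * B 0 1 + (1 + (m:ℤ)*t) * B 1 1 := by
  obtain ⟨e1, e2, e3, e4⟩ := mul_entries (Vz m t) B
  obtain ⟨l1, l2, l3, l4⟩ := entries_of_coe (coe_Vz m t)
  rw [e1, e2, e3, e4, l1, l2, l3, l4]
  refine ⟨by ring, by ring, by ring, by ring⟩

lemma mem_of_dvd {m p : ℕ} {H : Subgroup SL(2, ℤ)} (h1 : Gamma (m*p) ≤ H) (F : SL(2, ℤ))
    (e1 : ((m:ℤ)*(p:ℤ)) ∣ F 0 0 - 1) (e2 : ((m:ℤ)*(p:ℤ)) ∣ F 0 1)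
    (e3 : ((m:ℤ)*(p:ℤ)) ∣ F 1 0) (e4 : ((m:ℤ)*(p:ℤ)) ∣ F 1 1 - 1) : F ∈ H := by
  have hcast : ((m*p : ℕ) : ℤ) = (m:ℤ)*(p:ℤ) := by push_cast; ring
  refine h1 (Gamma_mem.mpr ⟨castone ?_, castzero ?_, castzero ?_, castone ?_⟩) <;>
    rw [hcast]
  exacts [e1, e2, e3, e4]

lemma key (p m : ℕ) (hp : p.Prime) (hm : 0 < m) (H : Subgroup SL(2, ℤ))
    (hH : H.Normal) (h1 : Gamma (m*p) ≤ H) (h2 : ModularGroup.T ^ m ∈ H) :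
    Gamma m ≤ H := by
  haveI : Fact p.Prime := ⟨hp⟩
  intro A hA
  rw [Gamma_mem] at hA
  obtain ⟨a₀, ha₀⟩ := dvd_of_castone hA.1
  obtain ⟨b₀, hb₀⟩ := dvd_of_castzero hA.2.1
  obtain ⟨c₀, hc₀⟩ := dvd_of_castzero hA.2.2.1
  obtain ⟨d₀, hd₀⟩ := dvd_of_castone hA.2.2.2
  have ha : A 0 0 = 1 + (m:ℤ)*a₀ := by linarith [ha₀]
  have hb : A 0 1 = (m:ℤ)*b₀ := hb₀
  have hc : A 1 0 = (m:ℤ)*c₀ := hc₀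
  have hd : A 1 1 = 1 + (m:ℤ)*d₀ := by linarith [hd₀]
  by_cases hpm : p ∣ m
  · -- CASE p ∣ m
    have hpmZ : (p:ℤ) ∣ (m:ℤ) := Int.natCast_dvd_natCast.mpr hpm
    have hDmm : ((m:ℤ)*(p:ℤ)) ∣ ((m:ℤ)*(m:ℤ)) := mul_dvd_mul_left _ hpmZ
    have hDm : ∀ x : ℤ, (p:ℤ) ∣ x → ((m:ℤ)*(p:ℤ)) ∣ (m:ℤ)*x := by
      intro x hx; exact mul_dvd_mul_left _ hx
    -- Stage 1 : B₁ = Lz c₀ * A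
    obtain ⟨s1a, s1b, s1c, s1d⟩ := Lz_mul m c₀ A
    set B₁ := Lz m c₀ * A with hB₁
    have h1a : B₁ 0 0 = 1 + (m:ℤ)*a₀ := by rw [s1a, ha]
    have h1b : B₁ 0 1 = (m:ℤ)*b₀ := by rw [s1b, hb]
    have h1c : ((m:ℤ)*(p:ℤ)) ∣ B₁ 1 0 := by
      have : B₁ 1 0 = ((m:ℤ)*(m:ℤ)) * (-(c₀*a₀)) := by rw [s1c, hc, ha]; ring
      rw [this]; exact hDmm.mul_right _
    have h1d : ∃ y, B₁ 1 1 = 1 + (m:ℤ)*y :=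
      ⟨d₀ - c₀*((m:ℤ)*b₀), by rw [s1d, hd, hb]; ring⟩
    -- Stage 2 : B₂ = B₁ * Tz (-b₀)
    obtain ⟨s2a, s2b, s2c, s2d⟩ := mul_Tz m (-b₀) B₁
    set B₂ := B₁ * Tz m (-b₀) with hB₂
    have h2a : B₂ 0 0 = 1 + (m:ℤ)*a₀ := by rw [s2a, h1a]
    have h2b : ((m:ℤ)*(p:ℤ)) ∣ B₂ 0 1 := by
      have : B₂ 0 1 = ((m:ℤ)*(m:ℤ)) * (-(b₀*a₀)) := by rw [s2b, h1a, h1b]; ring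
      rw [this]; exact hDmm.mul_right _
    have h2c : ((m:ℤ)*(p:ℤ)) ∣ B₂ 1 0 := by rw [s2c]; exact h1c
    obtain ⟨Y1, hY1⟩ := h1d
    have h2d : ∃ y, B₂ 1 1 = 1 + (m:ℤ)*y :=
      ⟨-b₀*B₁ 1 0 + Y1, by rw [s2d, hY1]; ring⟩
    obtain ⟨Y2, hY2⟩ := h2d
    -- det relation at stage 2 gives: (m*p) ∣ B₂ 1 1 - 1 + m*a₀
    have hdet2 := det_entries B₂
    have hQ : ((m:ℤ)*(p:ℤ)) ∣ B₂ 1 1 - 1 + (m:ℤ)*a₀ := by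
      have key : B₂ 1 1 - 1 + (m:ℤ)*a₀ =
          B₂ 0 1 * B₂ 1 0 + ((m:ℤ)*(m:ℤ))*(-(a₀*Y2)) := by
        rw [hY2] at hdet2 ⊢
        rw [h2a] at hdet2
        linear_combination hdet2
      rw [key]
      exact dvd_add (h2b.mul_right _) (hDmm.mul_right _)
    -- Stage 3 : B₃ = Vz a₀ * B₂
    obtain ⟨s3a, s3b, s3c, s3d⟩ := Vz_mul m a₀ B₂
    set B₃ := Vz m a₀ * B₂ with hB₃
    have h3a : ((m:ℤ)*(p:ℤ)) ∣ B₃ 0 0 - 1 := by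
      have : B₃ 0 0 - 1 = ((m:ℤ)*(m:ℤ))*(-(a₀*a₀)) + ((m:ℤ)*a₀) * B₂ 1 0 := by
        rw [s3a, h2a]; ring
      rw [this]
      exact dvd_add (hDmm.mul_right _) (h2c.mul_left _)
    have h3b : ((m:ℤ)*(p:ℤ)) ∣ B₃ 0 1 - (m:ℤ)*a₀ := by
      have : B₃ 0 1 - (m:ℤ)*a₀ = (1 - (m:ℤ)*a₀) * B₂ 0 1 + ((m:ℤ)*(m:ℤ))*(a₀*Y2) := by
        rw [s3b, hY2]; ring
      rw [this]
      exact dvd_add (h2b.mul_left _) (hDmm.mul_right _)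
    have h3c : ((m:ℤ)*(p:ℤ)) ∣ B₃ 1 0 + (m:ℤ)*a₀ := by
      have : B₃ 1 0 + (m:ℤ)*a₀ = ((m:ℤ)*(m:ℤ))*(-(a₀*a₀)) + (1 + (m:ℤ)*a₀) * B₂ 1 0 := by
        rw [s3c, h2a]; ring
      rw [this]
      exact dvd_add (hDmm.mul_right _) (h2c.mul_left _)
    have h3d : ((m:ℤ)*(p:ℤ)) ∣ B₃ 1 1 - 1 := by
      have : B₃ 1 1 - 1 = (-((m:ℤ)*a₀)) * B₂ 0 1 + (B₂ 1 1 - 1 + (m:ℤ)*a₀)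
          + ((m:ℤ)*(m:ℤ))*(a₀*Y2) := by
        rw [s3d]; rw [hY2]; ring
      rw [this]
      exact dvd_add (dvd_add (h2b.mul_left _) hQ) (hDmm.mul_right _)
    -- Stage 4 : B₄ = B₃ * Tz (-a₀)
    obtain ⟨s4a, s4b, s4c, s4d⟩ := mul_Tz m (-a₀) B₃
    set B₄ := B₃ * Tz m (-a₀) with hB₄
    have h4a : ((m:ℤ)*(p:ℤ)) ∣ B₄ 0 0 - 1 := by rw [s4a]; exact h3a
    have h4b : ((m:ℤ)*(p:ℤ)) ∣ B₄ 0 1 := by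
      have : B₄ 0 1 = (-((m:ℤ)*a₀)) * (B₃ 0 0 - 1) + (B₃ 0 1 - (m:ℤ)*a₀) := by
        rw [s4b]; ring
      rw [this]
      exact dvd_add (h3a.mul_left _) h3b
    have h4c : ((m:ℤ)*(p:ℤ)) ∣ B₄ 1 0 + (m:ℤ)*a₀ := by rw [s4c]; exact h3c
    have h4d : ((m:ℤ)*(p:ℤ)) ∣ B₄ 1 1 - 1 := by
      have : B₄ 1 1 - 1 = (-((m:ℤ)*a₀)) * (B₃ 1 0 + (m:ℤ)*a₀) + (B₃ 1 1 - 1)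
          + ((m:ℤ)*(m:ℤ))*(a₀*a₀) := by
        rw [s4d]; ring
      rw [this]
      exact dvd_add (dvd_add (h3c.mul_left _) h3d) (hDmm.mul_right _)
    -- Stage 5 : B₅ = Lz (-a₀) * B₄
    obtain ⟨s5a, s5b, s5c, s5d⟩ := Lz_mul m (-a₀) B₄
    set B₅ := Lz m (-a₀) * B₄ with hB₅
    have h5a : ((m:ℤ)*(p:ℤ)) ∣ B₅ 0 0 - 1 := by rw [s5a]; exact h4a
    have h5b : ((m:ℤ)*(p:ℤ)) ∣ B₅ 0 1 := by rw [s5b]; exact h4b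
    have h5c : ((m:ℤ)*(p:ℤ)) ∣ B₅ 1 0 := by
      have : B₅ 1 0 = (B₄ 1 0 + (m:ℤ)*a₀) + ((m:ℤ)*a₀) * (B₄ 0 0 - 1) := by
        rw [s5c]; ring
      rw [this]
      exact dvd_add h4c (h4a.mul_left _)
    have h5d : ((m:ℤ)*(p:ℤ)) ∣ B₅ 1 1 - 1 := by
      have : B₅ 1 1 - 1 = (B₄ 1 1 - 1) + ((m:ℤ)*a₀) * B₄ 0 1 := by
        rw [s5d]; ring
      rw [this]
      exact dvd_add h4d (h4b.mul_left _)
    have hB₅mem : B₅ ∈ H := mem_of_dvd h1 B₅ h5a h5b h5c h5d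
    -- unwind
    have hB₄mem : B₄ ∈ H := by
      rw [hB₅] at hB₅mem
      exact (H.mul_mem_cancel_left (Lz_mem m hH h2 _)).mp hB₅mem
    have hB₃mem : B₃ ∈ H := by
      rw [hB₄] at hB₄mem
      exact (H.mul_mem_cancel_right (Tz_mem m h2 _)).mp hB₄mem
    have hB₂mem : B₂ ∈ H := by
      rw [hB₃] at hB₃mem
      exact (H.mul_mem_cancel_left (Vz_mem m hH h2 _)).mp hB₃mem
    have hB₁mem : B₁ ∈ H := by
      rw [hB₂] at hB₂mem
      exact (H.mul_mem_cancel_right (Tz_mem m h2 _)).mp hB₂mem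
    rw [hB₁] at hB₁mem
    exact (H.mul_mem_cancel_left (Lz_mem m hH h2 _)).mp hB₁mem
  · -- CASE ¬ p ∣ m
    have hdetA := det_entries A
    have hμ : (((m:ℤ)) : ZMod p) ≠ 0 := by
      intro h
      exact hpm (Int.natCast_dvd_natCast.mp (dvd_of_castzero h))
    -- Step 0 : arrange that the top-left entry is a unit mod p
    obtain ⟨t₀, hα⟩ : ∃ t₀ : ℤ, ((A 0 0 - (m:ℤ)*t₀*A 0 1 : ℤ) : ZMod p) ≠ 0 := by
      by_cases h00 : ((A 0 0 : ℤ) : ZMod p) = 0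
      · have hβ : ((A 0 1 : ℤ) : ZMod p) ≠ 0 := by
          intro hb0
          have hpd : (p:ℤ) ∣ 1 := by
            rw [← hdetA]
            exact dvd_sub ((dvd_of_castzero h00).mul_right _) ((dvd_of_castzero hb0).mul_right _)
          have h1p := Int.le_of_dvd one_pos hpd
          have h2p : (2:ℤ) ≤ (p:ℤ) := by exact_mod_cast hp.two_le
          omega
        obtain ⟨t₀, ht₀⟩ := exists_solve p ((((m:ℤ)) : ZMod p) * ((A 0 1 : ℤ) : ZMod p))
          (((A 0 0 : ℤ) : ZMod p) - 1) (mul_ne_zero hμ hβ)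
        refine ⟨t₀, ?_⟩
        have e : ((A 0 0 - (m:ℤ)*t₀*A 0 1 : ℤ) : ZMod p) = 1 := by
          push_cast
          push_cast at ht₀
          linear_combination -ht₀
        rw [e]; exact one_ne_zero
      · exact ⟨0, by push_cast; simpa using h00⟩
    obtain ⟨s0a, s0b, s0c, s0d⟩ := mul_Lz m t₀ A
    set B₀ := A * Lz m t₀ with hB₀
    have h0a : B₀ 0 0 = 1 + (m:ℤ)*(a₀ - t₀*((m:ℤ)*b₀)) := by rw [s0a, ha, hb]; ring
    have h0b : B₀ 0 1 = (m:ℤ)*b₀ := by rw [s0b, hb]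
    have h0c : B₀ 1 0 = (m:ℤ)*(c₀ - t₀*A 1 1) := by rw [s0c, hc]; ring
    have hα0 : ((B₀ 0 0 : ℤ) : ZMod p) ≠ 0 := by rw [s0a]; exact hα
    -- Step 1 : clear the bottom-left entry mod m*p
    obtain ⟨t₁, ht₁⟩ := exists_solve p ((B₀ 0 0 : ℤ) : ZMod p)
      (((c₀ - t₀*A 1 1 : ℤ)) : ZMod p) hα0
    have hpc1 : (p:ℤ) ∣ (c₀ - t₀*A 1 1) - t₁ * B₀ 0 0 := by
      apply dvd_of_castzero
      push_cast
      push_cast at ht₁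
      linear_combination -ht₁
    obtain ⟨u₁, hu₁⟩ := hpc1
    obtain ⟨s1a, s1b, s1c, s1d⟩ := Lz_mul m t₁ B₀
    set B₁ := Lz m t₁ * B₀ with hB₁
    have h1a : B₁ 0 0 = B₀ 0 0 := s1a
    have h1b : B₁ 0 1 = (m:ℤ)*b₀ := by rw [s1b, h0b]
    have h1c : ((m:ℤ)*(p:ℤ)) ∣ B₁ 1 0 := by
      refine ⟨u₁, ?_⟩
      rw [s1c, h0c]
      linear_combination (m:ℤ)*hu₁
    -- Step 2 : clear the top-right entry mod m*p
    obtain ⟨t₂, ht₂⟩ := exists_solve p ((B₀ 0 0 : ℤ) : ZMod p) (-((b₀ : ℤ) : ZMod p)) hα0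
    have hpc2 : (p:ℤ) ∣ t₂ * B₀ 0 0 + b₀ := by
      apply dvd_of_castzero
      push_cast
      push_cast at ht₂
      linear_combination ht₂
    obtain ⟨u₂, hu₂⟩ := hpc2
    obtain ⟨s2a, s2b, s2c, s2d⟩ := mul_Tz m t₂ B₁
    set B₂ := B₁ * Tz m t₂ with hB₂
    have h2a : B₂ 0 0 = B₀ 0 0 := by rw [s2a, h1a]
    have h2b : ((m:ℤ)*(p:ℤ)) ∣ B₂ 0 1 := by
      refine ⟨u₂, ?_⟩
      rw [s2b, h1a, h1b]
      linear_combination (m:ℤ)*hu₂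
    have h2c : ((m:ℤ)*(p:ℤ)) ∣ B₂ 1 0 := by rw [s2c]; exact h1c
    have hdet2 := det_entries B₂
    rw [h2a] at hdet2
    -- Step 3 : build the correcting word W
    obtain ⟨z₀, hz₀⟩ := exists_solve p (((m:ℤ)) : ZMod p) (((a₀ - t₀*((m:ℤ)*b₀) : ℤ)) : ZMod p) hμ
    obtain ⟨w₀, hw₀⟩ := exists_solve p ((B₀ 0 0 : ℤ) : ZMod p) (-1) hα0
    obtain ⟨x₀, hx₀⟩ := exists_solve p ((B₀ 0 0 : ℤ) : ZMod p) (-((z₀ : ℤ) : ZMod p)) hα0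
    have hαeq : ((B₀ 0 0 : ℤ) : ZMod p)
        = 1 + (((m:ℤ)) : ZMod p) * ((a₀ - t₀*((m:ℤ)*b₀) : ℤ) : ZMod p) := by
      rw [h0a]; push_cast; ring
    obtain ⟨l0a, l0b, l0c, l0d⟩ := entries_of_coe (coe_Lz m (-w₀))
    set W₀ := Lz m (-w₀) with hW₀
    obtain ⟨s3a, s3b, s3c, s3d⟩ := Tz_mul m z₀ W₀
    set W₁ := Tz m z₀ * W₀ with hW₁
    have hw1a : W₁ 0 0 = 1 + (m:ℤ)*z₀*((m:ℤ)*w₀) := by rw [s3a, l0a, l0c]; ring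
    have hw1b : W₁ 0 1 = (m:ℤ)*z₀ := by rw [s3b, l0b, l0d]; ring
    have hw1c : W₁ 1 0 = (m:ℤ)*w₀ := by rw [s3c, l0c]; ring
    have hw1d : W₁ 1 1 = 1 := by rw [s3d, l0d]
    obtain ⟨s4a, s4b, s4c, s4d⟩ := Lz_mul m (-1) W₁
    set W₂ := Lz m (-1) * W₁ with hW₂
    have hw2a : W₂ 0 0 = 1 + (m:ℤ)*z₀*((m:ℤ)*w₀) := by rw [s4a, hw1a]
    have hw2b : W₂ 0 1 = (m:ℤ)*z₀ := by rw [s4b, hw1b]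
    have hw2c : W₂ 1 0 = (m:ℤ)*w₀ + (m:ℤ)*(1 + (m:ℤ)*z₀*((m:ℤ)*w₀)) := by
      rw [s4c, hw1c, hw1a]; ring
    have hw2d : W₂ 1 1 = 1 + (m:ℤ)*((m:ℤ)*z₀) := by rw [s4d, hw1d, hw1b]; ring
    obtain ⟨s5a, s5b, s5c, s5d⟩ := Tz_mul m x₀ W₂
    set W₃ := Tz m x₀ * W₂ with hW₃
    have hw3b : ((m:ℤ)*(p:ℤ)) ∣ W₃ 0 1 := by
      have e : W₃ 0 1 = (m:ℤ)*(z₀ + x₀*((m:ℤ)*((m:ℤ)*z₀) + 1)) := by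
        rw [s5b, hw2b, hw2d]; ring
      have hpz : (p:ℤ) ∣ z₀ + x₀*((m:ℤ)*((m:ℤ)*z₀) + 1) := by
        apply dvd_of_castzero
        push_cast
        push_cast at hz₀ hx₀ hαeq
        linear_combination ((m : ZMod p)*((x₀ : ℤ) : ZMod p))*hz₀
          - ((x₀ : ℤ) : ZMod p)*hαeq + hx₀
      rw [e]
      exact mul_dvd_mul_left _ hpz
    have hw3c : ((m:ℤ)*(p:ℤ)) ∣ W₃ 1 0 := by
      have e : W₃ 1 0 = (m:ℤ)*(1 + w₀ + ((m:ℤ)*z₀)*((m:ℤ)*w₀)) := by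
        rw [s5c, hw2c]; ring
      have hpz : (p:ℤ) ∣ 1 + w₀ + ((m:ℤ)*z₀)*((m:ℤ)*w₀) := by
        apply dvd_of_castzero
        push_cast
        push_cast at hz₀ hw₀ hαeq
        linear_combination ((m : ZMod p)*((w₀ : ℤ) : ZMod p))*hz₀
          - ((w₀ : ℤ) : ZMod p)*hαeq + hw₀
      rw [e]
      exact mul_dvd_mul_left _ hpz
    have hWa : ((m:ℤ)*(p:ℤ)) ∣ W₃ 1 1 - B₀ 0 0 := by
      have e : W₃ 1 1 - B₀ 0 0 = (m:ℤ)*((m:ℤ)*z₀ - (a₀ - t₀*((m:ℤ)*b₀))) := by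
        rw [s5d, hw2d, h0a]; ring
      have hpz : (p:ℤ) ∣ (m:ℤ)*z₀ - (a₀ - t₀*((m:ℤ)*b₀)) := by
        apply dvd_of_castzero
        push_cast
        push_cast at hz₀
        linear_combination hz₀
      rw [e]
      exact mul_dvd_mul_left _ hpz
    have hdetW := det_entries W₃
    -- the final matrix
    obtain ⟨f1, f2, f3, f4⟩ := mul_entries W₃ B₂
    set F := W₃ * B₂ with hF
    have hFa : ((m:ℤ)*(p:ℤ)) ∣ F 0 0 - 1 := by
      have e : F 0 0 - 1 = -(W₃ 0 0) * (W₃ 1 1 - B₀ 0 0) + W₃ 0 1 * W₃ 1 0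
          + W₃ 0 1 * B₂ 1 0 := by
        rw [f1, h2a]
        linear_combination hdetW
      rw [e]
      exact dvd_add (dvd_add (hWa.mul_left _) (hw3b.mul_right _)) (hw3b.mul_right _)
    have hFb : ((m:ℤ)*(p:ℤ)) ∣ F 0 1 := by
      rw [f2]
      exact dvd_add (h2b.mul_left _) (hw3b.mul_right _)
    have hFc : ((m:ℤ)*(p:ℤ)) ∣ F 1 0 := by
      rw [f3]
      exact dvd_add (hw3c.mul_right _) (h2c.mul_left _)
    have hFd : ((m:ℤ)*(p:ℤ)) ∣ F 1 1 - 1 := by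
      have e : F 1 1 - 1 = W₃ 1 0 * B₂ 0 1 + (W₃ 1 1 - B₀ 0 0) * B₂ 1 1
          + B₂ 0 1 * B₂ 1 0 := by
        rw [f4]
        linear_combination hdet2
      rw [e]
      exact dvd_add (dvd_add (h2b.mul_left _) (hWa.mul_right _)) (h2b.mul_right _)
    have hFmem : F ∈ H := mem_of_dvd h1 F hFa hFb hFc hFd
    have hW₃mem : W₃ ∈ H := by
      rw [hW₃, hW₂, hW₁, hW₀]
      exact mul_mem (Tz_mem m h2 _) (mul_mem (Lz_mem m hH h2 _)
        (mul_mem (Tz_mem m h2 _) (Lz_mem m hH h2 _)))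
    have hB₂mem : B₂ ∈ H := by
      rw [hF] at hFmem
      exact (H.mul_mem_cancel_left hW₃mem).mp hFmem
    have hB₁mem : B₁ ∈ H := by
      rw [hB₂] at hB₂mem
      exact (H.mul_mem_cancel_right (Tz_mem m h2 _)).mp hB₂mem
    have hB₀mem : B₀ ∈ H := by
      rw [hB₁] at hB₁mem
      exact (H.mul_mem_cancel_left (Lz_mem m hH h2 _)).mp hB₁mem
    rw [hB₀] at hB₀mem
    exact (H.mul_mem_cancel_right (Lz_mem m hH h2 _)).mp hB₀mem


lemma Gamma_le_of_dvd {m n : ℕ} (h : m ∣ n) : Gamma n ≤ Gamma m := by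
  intro x hx
  rw [Gamma_mem] at hx ⊢
  have hZ : (m:ℤ) ∣ (n:ℤ) := Int.natCast_dvd_natCast.mpr h
  exact ⟨castone (hZ.trans (dvd_of_castone hx.1)),
    castzero (hZ.trans (dvd_of_castzero hx.2.1)),
    castzero (hZ.trans (dvd_of_castzero hx.2.2.1)),
    castone (hZ.trans (dvd_of_castone hx.2.2.2))⟩

lemma T_pow_mem (m : ℕ) : ModularGroup.T ^ m ∈ Gamma m := by
  have h := ModularGroup_T_pow_mem_Gamma (m:ℤ) (m:ℤ) dvd_rfl
  simpa [Int.natAbs_natCast, zpow_natCast] using h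

end
end Stmt17Aux

open CongruenceSubgroup

theorem stmt17 (p m : ℕ) (hp : p.Prime) (hm : 0 < m) :
    Subgroup.normalClosure
      ((Gamma (m * p) : Set (Matrix.SpecialLinearGroup (Fin 2) ℤ)) ∪ {ModularGroup.T ^ m}) =
      Gamma m := by
  apply le_antisymm
  · haveI := Gamma_normal m
    apply Subgroup.normalClosure_le_normal
    rw [Set.union_subset_iff]
    constructor
    · exact fun x hx => Stmt17Aux.Gamma_le_of_dvd (Dvd.intro p rfl) hx
    · simpa using Stmt17Aux.T_pow_mem m
  · exact Stmt17Aux.key p m hp hm _ Subgroup.normalClosure_normal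
      (fun x hx => Subgroup.subset_normalClosure (Set.mem_union_left _ hx))
      (Subgroup.subset_normalClosure (Set.mem_union_right _ rfl))
end

section
/- Let r, s be positive integers. Then the smallest normal subgroup of SL(2, ℤ) containing Γ(rs) and T^s equals Γ(s), where T = [[1,1],[0,1]]. -/
open CongruenceSubgroup

open Matrix Matrix.SpecialLinearGroup ModularGroup

open scoped MatrixGroups

private lemma exists_coprime_shift (a c n : ℤ) (hn : n ≠ 0) (h : IsCoprime a c) :
    ∃ k : ℤ, IsCoprime (a + c * k) n := by
  classical
  set S : Finset ℕ := n.natAbs.primeFactors.filter (fun p : ℕ => ¬ (p : ℤ) ∣ a) with hS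
  refine ⟨(∏ p ∈ S, p : ℕ), ?_⟩
  rw [Int.isCoprime_iff_gcd_eq_one]
  by_contra hg
  obtain ⟨p, hp, hp1, hp2⟩ := Nat.Prime.not_coprime_iff_dvd.mp hg
  have hpz1 : (p : ℤ) ∣ a + c * ((∏ p ∈ S, p : ℕ) : ℤ) := by
    rw [← Int.natAbs_dvd_natAbs]
    simpa using hp1
  have hpn : (p : ℤ) ∣ n := by
    rw [← Int.natAbs_dvd_natAbs]
    simpa using hp2
  have hppz : Prime ((p : ℤ)) := Nat.prime_iff_prime_int.1 hp
  by_cases hpa : (p : ℤ) ∣ a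
  · have hpc : ¬ (p : ℤ) ∣ c := by
      intro hpc
      obtain ⟨x, y, hxy⟩ := h
      have h1 : (p : ℤ) ∣ 1 := by
        rw [← hxy]
        exact dvd_add (hpa.mul_left x) (hpc.mul_left y)
      have h2 : p ∣ 1 := by exact_mod_cast h1
      exact hp.one_lt.ne' (Nat.dvd_one.mp h2)
    have hpk : ¬ p ∣ (∏ q ∈ S, q) := by
      intro hpk
      obtain ⟨q, hqS, hpq⟩ := (Nat.Prime.prime hp).dvd_finset_prod_iff _ |>.mp hpk
      rw [hS, Finset.mem_filter] at hqS
      have hq : q.Prime := (Nat.mem_primeFactors.mp hqS.1).1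
      have hpq' : p = q := (Nat.prime_dvd_prime_iff_eq hp hq).mp hpq
      exact hqS.2 (hpq' ▸ hpa)
    have hck : (p : ℤ) ∣ c * ((∏ p ∈ S, p : ℕ) : ℤ) := by
      have h3 := dvd_sub hpz1 hpa
      simpa using h3
    rcases hppz.dvd_mul.mp hck with h' | h'
    · exact hpc h'
    · exact hpk (Int.natCast_dvd_natCast.mp h')
  · have hpS : p ∈ S := by
      rw [hS, Finset.mem_filter]
      exact ⟨Nat.mem_primeFactors.mpr ⟨hp, hp2, fun h0 => hn (Int.natAbs_eq_zero.mp h0)⟩, hpa⟩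
    have hpk : (p : ℤ) ∣ ((∏ p ∈ S, p : ℕ) : ℤ) :=
      Int.natCast_dvd_natCast.mpr (Finset.dvd_prod_of_mem _ hpS)
    have ha : (p : ℤ) ∣ a := by
      have h3 := dvd_sub hpz1 (hpk.mul_left c)
      simpa using h3
    exact hpa ha

private lemma zmod_eq_one_iff_dvd (x : ℤ) (m : ℕ) :
    (x : ZMod m) = 1 ↔ (m : ℤ) ∣ x - 1 := by
  rw [← ZMod.intCast_zmod_eq_zero_iff_dvd, ← sub_eq_zero]
  push_cast
  rfl

/-- The lower-triangular elementary matrix in `SL(2, ℤ)`. -/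
private def E21 (m : ℤ) : SL(2, ℤ) :=
  ⟨!![1, 0; m, 1], by norm_num [Matrix.det_fin_two_of]⟩

private lemma coe_E21 (m : ℤ) : (E21 m : Matrix (Fin 2) (Fin 2) ℤ) = !![1, 0; m, 1] := rfl

private lemma E21_mul (x y : ℤ) : E21 x * E21 y = E21 (x + y) := by
  ext i j
  rw [Matrix.SpecialLinearGroup.coe_mul]
  fin_cases i <;> fin_cases j <;>
    simp [E21, Matrix.mul_apply, Fin.sum_univ_two]

private lemma E21_eq (m : ℤ) :
    E21 m = ModularGroup.S * ModularGroup.T ^ (-m) * ModularGroup.S⁻¹ := by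
  rw [eq_mul_inv_iff_mul_eq]
  ext i j
  rw [Matrix.SpecialLinearGroup.coe_mul]
  fin_cases i <;> fin_cases j <;>
    simp [E21, ModularGroup.coe_S, ModularGroup.coe_T_zpow, Matrix.mul_apply, Fin.sum_univ_two]

theorem stmt18 (r s : ℕ) (hr : 0 < r) (hs : 0 < s) :
    Subgroup.normalClosure
      ((Gamma (r * s) : Set (Matrix.SpecialLinearGroup (Fin 2) ℤ)) ∪ {ModularGroup.T ^ s}) =
      Gamma s := by
  set N := Subgroup.normalClosure
      ((Gamma (r * s) : Set (Matrix.SpecialLinearGroup (Fin 2) ℤ)) ∪ {ModularGroup.T ^ s})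
    with hNdef
  haveI hNn : N.Normal := Subgroup.normalClosure_normal
  have hs_dvd_rs : (s : ℤ) ∣ ((r * s : ℕ) : ℤ) := ⟨(r : ℤ), by push_cast; ring⟩
  apply le_antisymm
  · haveI := Gamma_normal s
    apply Subgroup.normalClosure_le_normal
    rintro x (hx | hx)
    · rw [SetLike.mem_coe, Gamma_mem] at hx
      obtain ⟨h1, h2, h3, h4⟩ := hx
      rw [zmod_eq_one_iff_dvd] at h1 h4
      rw [ZMod.intCast_zmod_eq_zero_iff_dvd] at h2 h3
      rw [SetLike.mem_coe, Gamma_mem, zmod_eq_one_iff_dvd, zmod_eq_one_iff_dvd,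
        ZMod.intCast_zmod_eq_zero_iff_dvd, ZMod.intCast_zmod_eq_zero_iff_dvd]
      exact ⟨dvd_trans hs_dvd_rs h1, dvd_trans hs_dvd_rs h2, dvd_trans hs_dvd_rs h3,
        dvd_trans hs_dvd_rs h4⟩
    · rw [Set.mem_singleton_iff] at hx
      subst hx
      have h := ModularGroup_T_pow_mem_Gamma (s : ℤ) (s : ℤ) dvd_rfl
      simpa [zpow_natCast] using h
  · -- hard direction : Gamma s ≤ N
    have hTs : ModularGroup.T ^ s ∈ N :=
      Subgroup.subset_normalClosure (Set.mem_union_right _ (Set.mem_singleton _))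
    have hT : ∀ m : ℤ, (s : ℤ) ∣ m → ModularGroup.T ^ m ∈ N := by
      rintro m ⟨k, rfl⟩
      rw [_root_.zpow_mul, zpow_natCast]
      exact Subgroup.zpow_mem N hTs k
    have hE : ∀ m : ℤ, (s : ℤ) ∣ m → E21 m ∈ N := by
      intro m hm
      rw [E21_eq]
      exact hNn.conj_mem _ (hT (-m) (dvd_neg.mpr hm)) ModularGroup.S
    have hGamma_le : ∀ g ∈ Gamma (r * s), g ∈ N := fun g hg =>
      Subgroup.subset_normalClosure (Set.mem_union_left _ hg)
    intro A hA
    rw [Gamma_mem] at hA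
    obtain ⟨hA1, hA2, hA3, hA4⟩ := hA
    rw [zmod_eq_one_iff_dvd] at hA1 hA4
    rw [ZMod.intCast_zmod_eq_zero_iff_dvd] at hA2 hA3
    obtain ⟨a', ha'⟩ := hA1
    obtain ⟨b₀, hb₀⟩ := hA2
    obtain ⟨c₀, hc₀⟩ := hA3
    obtain ⟨d', hd'⟩ := hA4
    have hdet : A 0 0 * A 1 1 - A 0 1 * A 1 0 = 1 := by
      have h := A.2
      rw [Matrix.det_fin_two] at h
      exact h
    have hcop : IsCoprime (A 0 0) ((s : ℤ) * A 1 0) := by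
      apply IsCoprime.mul_right
      · exact ⟨1, -a', by linear_combination ha'⟩
      · exact ⟨A 1 1, -(A 0 1), by linear_combination hdet⟩
    obtain ⟨k₁, hk₁⟩ := exists_coprime_shift (A 0 0) ((s : ℤ) * A 1 0) ((r : ℤ) * (s : ℤ))
      (by positivity) hcop
    set u : ℤ := A 0 0 + (s : ℤ) * A 1 0 * k₁ with hu
    have hur : IsCoprime u ((r : ℤ)) := hk₁.of_mul_right_left
    obtain ⟨x, y, hxy⟩ := hur
    set k₂ : ℤ := -(c₀ * x) with hk₂
    set k₃ : ℤ := -((b₀ + k₁ * (A 1 1)) * x) with hk₃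
    set b₁ : ℤ := A 0 1 + (s : ℤ) * k₁ * A 1 1 with hb₁
    set c₂ : ℤ := A 1 0 + (s : ℤ) * k₂ * u with hc₂
    set b₃ : ℤ := b₁ + (s : ℤ) * k₃ * u with hb₃
    set v : ℤ := A 1 1 + (s : ℤ) * k₂ * b₁ + (s : ℤ) * k₃ * c₂ with hv
    set X₁ : SL(2, ℤ) := ModularGroup.T ^ ((s : ℤ) * k₁) with hX₁
    set X₂ : SL(2, ℤ) := E21 ((s : ℤ) * k₂) with hX₂
    set X₃ : SL(2, ℤ) := ModularGroup.T ^ ((s : ℤ) * k₃) with hX₃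
    set B : SL(2, ℤ) := X₂ * (X₁ * A * X₃) with hBdef
    have hB : (B : Matrix (Fin 2) (Fin 2) ℤ) = !![u, b₃; c₂, v] := by
      have h1 : (B : Matrix (Fin 2) (Fin 2) ℤ) =
          !![1, 0; (s : ℤ) * k₂, 1] * (!![1, (s : ℤ) * k₁; 0, 1] *
            (A : Matrix (Fin 2) (Fin 2) ℤ) * !![1, (s : ℤ) * k₃; 0, 1]) := by
        simp only [hBdef, hX₁, hX₂, hX₃, Matrix.SpecialLinearGroup.coe_mul, coe_E21, ModularGroup.coe_T_zpow]
      rw [h1, Matrix.eta_fin_two (A : Matrix (Fin 2) (Fin 2) ℤ)]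
      ext i j
      fin_cases i <;> fin_cases j <;>
        · simp [Matrix.mul_apply, Fin.sum_univ_two, hu, hb₃, hb₁, hc₂, hv]
          ring
    have hc₂_eq : c₂ = ((r : ℤ) * (s : ℤ)) * (c₀ * y) := by
      rw [hc₂, hk₂]
      linear_combination hc₀ - (s : ℤ) * c₀ * hxy
    have hb₃_eq : b₃ = ((r : ℤ) * (s : ℤ)) * ((b₀ + k₁ * A 1 1) * y) := by
      rw [hb₃, hb₁, hk₃]
      linear_combination hb₀ - (s : ℤ) * (b₀ + k₁ * A 1 1) * hxy
    have hdetB : u * v - b₃ * c₂ = 1 := by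
      have h := B.2
      rw [hB, Matrix.det_fin_two_of] at h
      exact h
    have hsu : (s : ℤ) ∣ u - 1 := ⟨a' + A 1 0 * k₁, by rw [hu]; linear_combination ha'⟩
    have hsv : (s : ℤ) ∣ v - 1 :=
      ⟨d' + k₂ * b₁ + k₃ * c₂, by rw [hv]; linear_combination hd'⟩
    set P : SL(2, ℤ) := ModularGroup.T ^ u * E21 (-v) * ModularGroup.T ^ (u - 1) * E21 1 *
        ModularGroup.T ^ (-1 : ℤ) with hPdef
    have hP : (P : Matrix (Fin 2) (Fin 2) ℤ) =
        !![(1 - u * v) * u + u, u * v - 1; 1 - u * v, v] := by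
      have h1 : (P : Matrix (Fin 2) (Fin 2) ℤ) =
          !![1, u; 0, 1] * !![1, 0; -v, 1] * !![1, u - 1; 0, 1] * !![1, 0; 1, 1] *
            !![1, (-1 : ℤ); 0, 1] := by
        simp only [hPdef, Matrix.SpecialLinearGroup.coe_mul, coe_E21, ModularGroup.coe_T_zpow]
      rw [h1]
      ext i j
      fin_cases i <;> fin_cases j <;>
        · simp [Matrix.mul_apply, Fin.sum_univ_two]
          ring
    have h0 : ((c₂ : ℤ) : ZMod (r * s)) = 0 := by
      rw [ZMod.intCast_zmod_eq_zero_iff_dvd]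
      exact ⟨c₀ * y, by rw [hc₂_eq]; push_cast; ring⟩
    have h0' : ((b₃ : ℤ) : ZMod (r * s)) = 0 := by
      rw [ZMod.intCast_zmod_eq_zero_iff_dvd]
      exact ⟨(b₀ + k₁ * A 1 1) * y, by rw [hb₃_eq]; push_cast; ring⟩
    have h1 : ((u : ℤ) : ZMod (r * s)) * ((v : ℤ) : ZMod (r * s)) = 1 := by
      have h2 : ((u * v - b₃ * c₂ : ℤ) : ZMod (r * s)) = ((1 : ℤ) : ZMod (r * s)) := by
        rw [hdetB]
      push_cast at h2
      linear_combination h2 + ((c₂ : ℤ) : ZMod (r * s)) * h0'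
    have hmapeq : Matrix.SpecialLinearGroup.map (Int.castRingHom (ZMod (r * s))) B =
        Matrix.SpecialLinearGroup.map (Int.castRingHom (ZMod (r * s))) P := by
      have hB00 : B 0 0 = u := by rw [hB]; rfl
      have hB01 : B 0 1 = b₃ := by rw [hB]; rfl
      have hB10 : B 1 0 = c₂ := by rw [hB]; rfl
      have hB11 : B 1 1 = v := by rw [hB]; rfl
      have hP00 : P 0 0 = (1 - u * v) * u + u := by rw [hP]; rfl
      have hP01 : P 0 1 = u * v - 1 := by rw [hP]; rfl
      have hP10 : P 1 0 = 1 - u * v := by rw [hP]; rfl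
      have hP11 : P 1 1 = v := by rw [hP]; rfl
      ext i j
      fin_cases i <;> fin_cases j
      · show ((B 0 0 : ℤ) : ZMod (r * s)) = ((P 0 0 : ℤ) : ZMod (r * s))
        rw [hB00, hP00]
        push_cast
        linear_combination ((u : ℤ) : ZMod (r * s)) * h1
      · show ((B 0 1 : ℤ) : ZMod (r * s)) = ((P 0 1 : ℤ) : ZMod (r * s))
        rw [hB01, hP01]
        push_cast
        linear_combination h0' - h1
      · show ((B 1 0 : ℤ) : ZMod (r * s)) = ((P 1 0 : ℤ) : ZMod (r * s))
        rw [hB10, hP10]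
        push_cast
        linear_combination h0 + h1
      · show ((B 1 1 : ℤ) : ZMod (r * s)) = ((P 1 1 : ℤ) : ZMod (r * s))
        rw [hB11, hP11]
    have hBPmem : B * P⁻¹ ∈ Gamma (r * s) := by
      rw [Gamma_mem']
      rw [_root_.map_mul, _root_.map_inv, hmapeq, _root_.mul_inv_cancel]
    have hPmem : P ∈ N := by
      have h2 : (s : ℤ) ∣ (-v + 1) := by
        obtain ⟨w, hw⟩ := hsv
        exact ⟨-w, by linear_combination -hw⟩
      rw [← QuotientGroup.eq_one_iff]
      have e : ∀ g : SL(2, ℤ), g ∈ N → (g : SL(2, ℤ) ⧸ N) = 1 := fun g hg =>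
        (QuotientGroup.eq_one_iff g).mpr hg
      rw [hPdef]
      rw [QuotientGroup.mk_mul, QuotientGroup.mk_mul, QuotientGroup.mk_mul,
        QuotientGroup.mk_mul]
      rw [e _ (hT _ hsu), mul_one]
      rw [mul_assoc ((ModularGroup.T ^ u : SL(2, ℤ)) : SL(2, ℤ) ⧸ N)]
      rw [← QuotientGroup.mk_mul, E21_mul, e _ (hE _ h2), mul_one]
      rw [← QuotientGroup.mk_mul, ← _root_.zpow_add]
      have h3 : u + (-1 : ℤ) = u - 1 := by ring
      rw [h3]
      exact e _ (hT _ hsu)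
    have hBmem : B ∈ N := by
      have hBeq : B = (B * P⁻¹) * P := by group
      rw [hBeq]
      exact N.mul_mem (hGamma_le _ hBPmem) hPmem
    have hAeq : A = X₁⁻¹ * (X₂⁻¹ * B) * X₃⁻¹ := by
      rw [hBdef]
      group
    rw [hAeq]
    refine N.mul_mem (N.mul_mem (N.inv_mem ?_) (N.mul_mem (N.inv_mem ?_) hBmem)) (N.inv_mem ?_)
    · rw [hX₁]; exact hT _ ⟨k₁, rfl⟩
    · rw [hX₂]; exact hE _ ⟨k₂, rfl⟩
    · rw [hX₃]; exact hT _ ⟨k₃, rfl⟩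
end

section
/- Let K be a congruence subgroup of PSL(2, ℤ) of geometric level r and algebraic level s. Then r = s. -/
open Matrix

noncomputable section

namespace St19

/-- The negative identity -I in SL(2, ℤ). -/
def negI : Matrix.SpecialLinearGroup (Fin 2) ℤ := ⟨-1, by simp [Matrix.det_neg]⟩

lemma negI_central (x : Matrix.SpecialLinearGroup (Fin 2) ℤ) : x * negI = negI * x := by
  apply Subtype.ext
  show (x : Matrix (Fin 2) (Fin 2) ℤ) * (-1) = (-1) * (x : Matrix (Fin 2) (Fin 2) ℤ)
  rw [mul_neg_one, neg_one_mul]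

/-- The center {±I} of SL(2, ℤ). -/
def Z : Subgroup (Matrix.SpecialLinearGroup (Fin 2) ℤ) := Subgroup.zpowers negI

instance : Z.Normal := by
  constructor
  intro n hn g
  obtain ⟨k, rfl⟩ := Subgroup.mem_zpowers_iff.mp hn
  have hc : Commute g negI := negI_central g
  have h : g * negI ^ k * g⁻¹ = negI ^ k := by
    rw [(hc.zpow_right k).eq, mul_inv_cancel_right]
  rw [h]
  exact Subgroup.zpow_mem _ (Subgroup.mem_zpowers _) k

/-- PSL(2, ℤ) = SL(2, ℤ)/{±I}. -/
abbrev PSL2Z := Matrix.SpecialLinearGroup (Fin 2) ℤ ⧸ Z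

/-- The quotient map SL(2, ℤ) → PSL(2, ℤ). -/
def pr : Matrix.SpecialLinearGroup (Fin 2) ℤ →* PSL2Z := QuotientGroup.mk' Z

/-- Γ̄(n), the image in PSL(2, ℤ) of the principal congruence subgroup Γ(n). -/
def GammaBar (n : ℕ) : Subgroup PSL2Z := (CongruenceSubgroup.Gamma n).map pr

/-- The image of T = [[1,1],[0,1]] in PSL(2, ℤ). -/
def Tb : PSL2Z := pr ModularGroup.T


/-! ### Auxiliary material for Wohlfahrt's theorem -/

open Matrix.SpecialLinearGroup CongruenceSubgroup

local notation "SL2" => Matrix.SpecialLinearGroup (Fin 2) ℤ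

lemma exists_isCoprime_add (a c M : ℤ) (hM : M ≠ 0) (h : IsCoprime a c) :
    ∃ k : ℤ, IsCoprime (a + c * k) M := by
  classical
  set S : Finset ℕ := M.natAbs.primeFactors.filter (fun p : ℕ => ¬ ((p : ℤ) ∣ a)) with hS
  set k : ℕ := ∏ p ∈ S, p with hk
  refine ⟨(k : ℤ), ?_⟩
  rw [Int.isCoprime_iff_gcd_eq_one]
  by_contra hg
  obtain ⟨p, hp, hpdvd⟩ := Nat.exists_prime_and_dvd hg
  have hpd1 : (p : ℤ) ∣ a + c * (k : ℤ) :=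
    dvd_trans (Int.natCast_dvd_natCast.mpr hpdvd) (Int.gcd_dvd_left _ _)
  have hpdM : (p : ℤ) ∣ M :=
    dvd_trans (Int.natCast_dvd_natCast.mpr hpdvd) (Int.gcd_dvd_right _ _)
  obtain ⟨u, v, huv⟩ := h
  by_cases hpa : (p : ℤ) ∣ a
  · have hpk : ¬ (p : ℤ) ∣ (k : ℤ) := by
      rw [Int.natCast_dvd_natCast, hk]
      intro hdvd
      obtain ⟨q, hqS, hqd⟩ := (Nat.Prime.prime hp).dvd_finset_prod_iff _ |>.mp hdvd
      have hq : q.Prime := Nat.prime_of_mem_primeFactors (Finset.mem_filter.mp hqS).1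
      have hpq : p = q := (Nat.prime_dvd_prime_iff_eq hp hq).mp hqd
      exact (Finset.mem_filter.mp hqS).2 (hpq ▸ hpa)
    have hpc : (p : ℤ) ∣ c := by
      have h2 := dvd_sub hpd1 hpa
      simp only [add_sub_cancel_left] at h2
      rcases (Int.Prime.dvd_mul' hp h2) with h1 | h1
      · exact h1
      · exact absurd h1 hpk
    have hone : (p : ℤ) ∣ 1 := huv ▸ dvd_add (hpa.mul_left u) (hpc.mul_left v)
    have hp1 : (p : ℤ) = 1 := Int.eq_one_of_dvd_one (by positivity) hone
    have := hp.two_le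
    omega
  · have hpS : p ∈ S := by
      rw [hS, Finset.mem_filter]
      refine ⟨Nat.mem_primeFactors.mpr ⟨hp, ?_, Int.natAbs_ne_zero.mpr hM⟩, hpa⟩
      exact Int.natCast_dvd_natCast.mp (by rwa [Int.natCast_natAbs, dvd_abs])
    have hpk : (p : ℤ) ∣ (k : ℤ) :=
      Int.natCast_dvd_natCast.mpr (Finset.dvd_prod_of_mem _ hpS)
    have : (p : ℤ) ∣ a := by
      have h2 := dvd_sub hpd1 (hpk.mul_left c)
      simpa using h2
    exact hpa this

lemma exists_split (r : ℕ) (s : ℕ) (hs : 0 < s) :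
    ∃ P Q : ℕ, s = P * Q ∧ Nat.Coprime Q r ∧ P ∣ r ^ s := by
  induction s using Nat.strong_induction_on with
  | _ s IH =>
    by_cases hg : Nat.gcd s r = 1
    · exact ⟨1, s, (one_mul s).symm, hg, one_dvd _⟩
    · have hgdvd : Nat.gcd s r ∣ s := Nat.gcd_dvd_left s r
      have hg0 : Nat.gcd s r ≠ 0 := by
        intro h0; rw [Nat.gcd_eq_zero_iff] at h0; omega
      have hg2 : 2 ≤ Nat.gcd s r := by omega
      obtain ⟨s', hs'⟩ := hgdvd
      have hs'pos : 0 < s' := by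
        rcases Nat.eq_zero_or_pos s' with h | h
        · subst h; omega
        · exact h
      have hs'lt : s' < s := by
        nlinarith
      obtain ⟨P, Q, h1, h2, h3⟩ := IH s' hs'lt hs'pos
      refine ⟨Nat.gcd s r * P, Q, ?_, h2, ?_⟩
      · calc s = Nat.gcd s r * s' := hs'
          _ = Nat.gcd s r * (P * Q) := by rw [h1]
          _ = Nat.gcd s r * P * Q := by ring
      have h4 : Nat.gcd s r * P ∣ r * r ^ s' :=
        mul_dvd_mul (Nat.gcd_dvd_right s r) h3
      calc Nat.gcd s r * P ∣ r * r ^ s' := h4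
        _ = r ^ (s' + 1) := by ring
        _ ∣ r ^ s := pow_dvd_pow r (by omega)

def Uel (w : ℤ) : SL2 := ⟨!![1, w; 0, 1], by simp [Matrix.det_fin_two_of]⟩
/-- lower elementary matrix -/
def Lel (w : ℤ) : SL2 := ⟨!![1, 0; w, 1], by simp [Matrix.det_fin_two_of]⟩

@[simp] lemma coe_Uel (w : ℤ) : (Uel w : Matrix (Fin 2) (Fin 2) ℤ) = !![1, w; 0, 1] := rfl
@[simp] lemma coe_Lel (w : ℤ) : (Lel w : Matrix (Fin 2) (Fin 2) ℤ) = !![1, 0; w, 1] := rfl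

lemma Uel_zero : Uel 0 = 1 := by
  apply Subtype.ext
  rw [coe_Uel, coe_one, Matrix.one_fin_two]

lemma Lel_zero : Lel 0 = 1 := by
  apply Subtype.ext
  rw [coe_Lel, coe_one, Matrix.one_fin_two]

lemma Uel_mul_Uel (w w' : ℤ) : Uel w * Uel w' = Uel (w + w') := by
  apply Subtype.ext
  rw [coe_mul, coe_Uel, coe_Uel, coe_Uel, Matrix.mul_fin_two]
  norm_num
  ring_nf

lemma Lel_mul_Lel (w w' : ℤ) : Lel w * Lel w' = Lel (w + w') := by
  apply Subtype.ext
  rw [coe_mul, coe_Lel, coe_Lel, coe_Lel, Matrix.mul_fin_two]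
  norm_num

lemma Uel_inv (w : ℤ) : (Uel w)⁻¹ = Uel (-w) := by
  apply inv_eq_of_mul_eq_one_right
  rw [Uel_mul_Uel, add_neg_cancel, Uel_zero]

lemma Lel_inv (w : ℤ) : (Lel w)⁻¹ = Lel (-w) := by
  apply inv_eq_of_mul_eq_one_right
  rw [Lel_mul_Lel, add_neg_cancel, Lel_zero]

lemma Uel_eq_T_zpow (w : ℤ) : Uel w = ModularGroup.T ^ w :=
  Subtype.ext (ModularGroup.coe_T_zpow w).symm

lemma S_mul_Uel_mul_S_inv (w : ℤ) :
    ModularGroup.S * Uel (-w) * ModularGroup.S⁻¹ = Lel w := by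
  rw [mul_inv_eq_iff_eq_mul]
  apply Subtype.ext
  rw [coe_mul, coe_mul]
  have hS : (ModularGroup.S : Matrix (Fin 2) (Fin 2) ℤ) = !![0, -1; 1, 0] := rfl
  rw [hS, coe_Uel, coe_Lel, Matrix.mul_fin_two, Matrix.mul_fin_two]
  norm_num

/-- the commutator-type element -/
def Cel (w f : ℤ) : SL2 :=
  ⟨!![1 + f*w + f^2*w^2, -(f^2*w); f*w^2, 1 - f*w], by rw [Matrix.det_fin_two_of]; ring⟩
/-- its inverse -/
def Del (w f : ℤ) : SL2 :=
  ⟨!![1 - f*w, f^2*w; -(f*w^2), 1 + f*w + f^2*w^2], by rw [Matrix.det_fin_two_of]; ring⟩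

@[simp] lemma coe_Del (w f : ℤ) :
    (Del w f : Matrix (Fin 2) (Fin 2) ℤ) = !![1 - f*w, f^2*w; -(f*w^2), 1 + f*w + f^2*w^2] := rfl

lemma Cel_eq (w f : ℤ) : Cel w f = Uel f * Lel w * Uel (-f) * Lel (-w) := by
  apply Subtype.ext
  rw [coe_mul, coe_mul, coe_mul, coe_Uel, coe_Lel, coe_Uel, coe_Lel,
    Matrix.mul_fin_two, Matrix.mul_fin_two, Matrix.mul_fin_two]
  show (!![1 + f*w + f^2*w^2, -(f^2*w); f*w^2, 1 - f*w] : Matrix (Fin 2) (Fin 2) ℤ) = _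
  ring_nf

lemma Cel_mul_Del (w f : ℤ) : Cel w f * Del w f = 1 := by
  apply Subtype.ext
  rw [coe_mul]
  show (!![1 + f*w + f^2*w^2, -(f^2*w); f*w^2, 1 - f*w] : Matrix (Fin 2) (Fin 2) ℤ)
    * !![1 - f*w, f^2*w; -(f*w^2), 1 + f*w + f^2*w^2] = 1
  rw [Matrix.mul_fin_two]
  have h1 : (1 : Matrix (Fin 2) (Fin 2) ℤ) = !![1,0;0,1] := by
    rw [Matrix.one_fin_two]
  rw [h1]
  ring_nf

section memb
variable {r : ℕ} {H : Subgroup SL2}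
  (hT : ∀ g : SL2, g * ModularGroup.T ^ r * g⁻¹ ∈ H)

include hT

lemma conj_Uel_mem (g : SL2) {w : ℤ} (hw : (r : ℤ) ∣ w) : g * Uel w * g⁻¹ ∈ H := by
  obtain ⟨m, rfl⟩ := hw
  have h1 : Uel ((r : ℤ) * m) = (ModularGroup.T ^ (r : ℕ)) ^ m := by
    rw [Uel_eq_T_zpow, ← zpow_natCast ModularGroup.T (r : ℕ), ← _root_.zpow_mul]
  have h2 : g * Uel ((r:ℤ) * m) * g⁻¹ = (g * ModularGroup.T ^ (r:ℕ) * g⁻¹) ^ m := by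
    rw [h1]
    simpa [MulAut.conj_apply] using
      (map_zpow (MulAut.conj g) (ModularGroup.T ^ (r : ℕ)) m).symm
  rw [h2]
  exact Subgroup.zpow_mem H (hT g) m

lemma Uel_mem {w : ℤ} (hw : (r : ℤ) ∣ w) : Uel w ∈ H := by
  have := conj_Uel_mem hT 1 hw
  simpa using this

lemma Lel_mem {w : ℤ} (hw : (r : ℤ) ∣ w) : Lel w ∈ H := by
  rw [← S_mul_Uel_mul_S_inv]
  exact conj_Uel_mem hT _ (dvd_neg.mpr hw)

lemma Cel_mem {w : ℤ} (f : ℤ) (hw : (r : ℤ) ∣ w) : Cel w f ∈ H := by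
  rw [Cel_eq]
  have h1 : Uel f * Lel w * Uel (-f) = (Uel f * ModularGroup.S) * Uel (-w) *
      (Uel f * ModularGroup.S)⁻¹ := by
    rw [← S_mul_Uel_mul_S_inv w, _root_.mul_inv_rev, Uel_inv]
    group
  refine H.mul_mem ?_ (Lel_mem hT (dvd_neg.mpr hw))
  rw [h1]
  exact conj_Uel_mem hT _ (dvd_neg.mpr hw)

lemma Del_mem {w : ℤ} (f : ℤ) (hw : (r : ℤ) ∣ w) : Del w f ∈ H := by
  have h1 : (Cel w f)⁻¹ = Del w f := inv_eq_of_mul_eq_one_right (Cel_mul_Del w f)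
  rw [← h1]
  exact H.inv_mem (Cel_mem hT f hw)

end memb

lemma sandwich_mem_iff {H : Subgroup SL2} {g₁ g₂ : SL2} (h₁ : g₁ ∈ H) (h₂ : g₂ ∈ H)
    (A : SL2) : g₁ * A * g₂ ∈ H ↔ A ∈ H := by
  constructor
  · intro h
    have hEq : g₁⁻¹ * (g₁ * A * g₂) * g₂⁻¹ = A := by group
    rw [← hEq]
    exact H.mul_mem (H.mul_mem (H.inv_mem h₁) h) (H.inv_mem h₂)
  · intro h
    exact H.mul_mem (H.mul_mem h₁ h) h₂

-- entry lemmas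
variable (A : SL2) (a b c d x : ℤ) (hA : (A : Matrix (Fin 2) (Fin 2) ℤ) = !![a, b; c, d])

lemma coe_Uel_mul (hA : (A : Matrix (Fin 2) (Fin 2) ℤ) = !![a, b; c, d]) :
    ((Uel x * A : SL2) : Matrix (Fin 2) (Fin 2) ℤ) = !![a + x*c, b + x*d; c, d] := by
  rw [coe_mul, hA]
  show (!![1, x; 0, 1] : Matrix (Fin 2) (Fin 2) ℤ) * _ = _
  rw [Matrix.mul_fin_two]
  norm_num

lemma coe_Lel_mul (hA : (A : Matrix (Fin 2) (Fin 2) ℤ) = !![a, b; c, d]) :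
    ((Lel x * A : SL2) : Matrix (Fin 2) (Fin 2) ℤ) = !![a, b; c + x*a, d + x*b] := by
  rw [coe_mul, hA]
  show (!![1, 0; x, 1] : Matrix (Fin 2) (Fin 2) ℤ) * _ = _
  rw [Matrix.mul_fin_two]
  norm_num
  ring_nf
  exact ⟨trivial, trivial⟩

lemma coe_mul_Uel (hA : (A : Matrix (Fin 2) (Fin 2) ℤ) = !![a, b; c, d]) :
    ((A * Uel x : SL2) : Matrix (Fin 2) (Fin 2) ℤ) = !![a, a*x + b; c, c*x + d] := by
  rw [coe_mul, hA]
  show _ * (!![1, x; 0, 1] : Matrix (Fin 2) (Fin 2) ℤ) = _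
  rw [Matrix.mul_fin_two]
  norm_num

lemma coe_mul_Lel (hA : (A : Matrix (Fin 2) (Fin 2) ℤ) = !![a, b; c, d]) :
    ((A * Lel x : SL2) : Matrix (Fin 2) (Fin 2) ℤ) = !![a + b*x, b; c + d*x, d] := by
  rw [coe_mul, hA]
  show _ * (!![1, 0; x, 1] : Matrix (Fin 2) (Fin 2) ℤ) = _
  rw [Matrix.mul_fin_two]
  norm_num

lemma coe_Del_mul (w f : ℤ) (hA : (A : Matrix (Fin 2) (Fin 2) ℤ) = !![a, b; c, d]) :
    ((Del w f * A : SL2) : Matrix (Fin 2) (Fin 2) ℤ) =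
      !![(1 - f*w)*a + f^2*w*c, (1 - f*w)*b + f^2*w*d;
         -(f*w^2)*a + (1 + f*w + f^2*w^2)*c, -(f*w^2)*b + (1 + f*w + f^2*w^2)*d] := by
  rw [coe_mul, hA]
  show (!![1 - f*w, f^2*w; -(f*w^2), 1 + f*w + f^2*w^2] : Matrix (Fin 2) (Fin 2) ℤ) * _ = _
  rw [Matrix.mul_fin_two]

lemma isCoprime_of_dvd_sub_one {a n : ℤ} (h : n ∣ a - 1) : IsCoprime a n := by
  obtain ⟨t, ht⟩ := h
  exact ⟨1, -t, by linarith⟩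

lemma clean_step {r s : ℕ} {H : Subgroup SL2}
    (hT : ∀ g : SL2, g * ModularGroup.T ^ r * g⁻¹ ∈ H)
    (A : SL2) (a b c d : ℤ) (hA : (A : Matrix (Fin 2) (Fin 2) ℤ) = !![a, b; c, d])
    (hrb : (r : ℤ) ∣ b) (hrc : (r : ℤ) ∣ c) (hcop : IsCoprime a (s : ℤ)) :
    ∃ (B : SL2) (b' c' d' : ℤ), (B : Matrix (Fin 2) (Fin 2) ℤ) = !![a, b'; c', d'] ∧
      (s : ℤ) ∣ b' ∧ (s : ℤ) ∣ c' ∧ (r : ℤ) ∣ b' ∧ (r : ℤ) ∣ c' ∧ (B ∈ H ↔ A ∈ H) := by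
  obtain ⟨c₁, rfl⟩ := hrc
  obtain ⟨b₁, rfl⟩ := hrb
  obtain ⟨u, v, huv⟩ := hcop
  have hmid := coe_Lel_mul A a ((r:ℤ)*b₁) ((r:ℤ)*c₁) d ((r:ℤ)*(-(c₁*u))) hA
  have hfin := coe_mul_Uel _ a ((r:ℤ)*b₁) ((r:ℤ)*c₁ + ((r:ℤ)*(-(c₁*u)))*a)
    (d + ((r:ℤ)*(-(c₁*u)))*((r:ℤ)*b₁)) ((r:ℤ)*(-(b₁*u))) hmid
  refine ⟨Lel ((r:ℤ)*(-(c₁*u))) * A * Uel ((r:ℤ)*(-(b₁*u))), _, _, _, hfin, ?_, ?_, ?_, ?_, ?_⟩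
  · exact ⟨(r:ℤ)*b₁*v, by linear_combination (-(r:ℤ)*b₁) * huv⟩
  · exact ⟨(r:ℤ)*c₁*v, by linear_combination (-(r:ℤ)*c₁) * huv⟩
  · exact ⟨a*(-(b₁*u)) + b₁, by ring⟩
  · exact ⟨c₁ + (-(c₁*u))*a, by ring⟩
  · exact sandwich_mem_iff (Lel_mem hT (dvd_mul_right _ _)) (Uel_mem hT (dvd_mul_right _ _)) A
lemma rec_step {r s : ℕ} {H : Subgroup SL2} (hr : 0 < r) (hs : 0 < s)
    (hT : ∀ g : SL2, g * ModularGroup.T ^ r * g⁻¹ ∈ H)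
    (hGs : Gamma s ≤ H) (P Q : ℕ) (hsPQ : s = P * Q) (hQr : Nat.Coprime Q r)
    (hPr : P ∣ r ^ s) :
    ∀ n : ℕ, ∀ e : ℕ, 1 ≤ e → s ≤ e + n → ∀ A : SL2, ∀ a b c d : ℤ,
      (A : Matrix (Fin 2) (Fin 2) ℤ) = !![a, b; c, d] →
      ((Q : ℤ) * (r : ℤ)^e) ∣ a - 1 → (s : ℤ) ∣ b → (s : ℤ) ∣ c →
      (r : ℤ) ∣ b → (r : ℤ) ∣ c → A ∈ H := by
  have hsPQ' : (s : ℤ) = (P : ℤ) * (Q : ℤ) := by exact_mod_cast hsPQ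
  intro n
  induction n with
  | zero =>
    intro e he hse A a b c d hA h1 hsb hsc hrb hrc
    apply hGs
    have hdet : a * d - b * c = 1 := by
      have h2 := A.2
      rw [hA, Matrix.det_fin_two_of] at h2
      exact h2
    have hPe : (P : ℤ) ∣ (r : ℤ)^e := by
      have h3 : P ∣ r ^ e := dvd_trans hPr (pow_dvd_pow r (by omega))
      exact_mod_cast Int.natCast_dvd_natCast.mpr h3
    have hse1 : (s : ℤ) ∣ a - 1 := by
      refine dvd_trans ?_ h1
      rw [hsPQ', mul_comm ((P:ℤ)) ((Q:ℤ))]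
      exact mul_dvd_mul_left _ hPe
    have hsd : (s : ℤ) ∣ d - 1 := by
      have h4 : d - 1 = -d*(a-1) + b*c := by linear_combination hdet
      rw [h4]
      exact dvd_add (hse1.mul_left (-d)) (hsc.mul_left b)
    have e00 : (A : Matrix (Fin 2) (Fin 2) ℤ) 0 0 = a := by rw [hA]; simp
    have e01 : (A : Matrix (Fin 2) (Fin 2) ℤ) 0 1 = b := by rw [hA]; simp
    have e10 : (A : Matrix (Fin 2) (Fin 2) ℤ) 1 0 = c := by rw [hA]; simp
    have e11 : (A : Matrix (Fin 2) (Fin 2) ℤ) 1 1 = d := by rw [hA]; simp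
    rw [Gamma_mem, e00, e01, e10, e11]
    refine ⟨?_, ?_, ?_, ?_⟩
    · have h5 := (ZMod.intCast_zmod_eq_zero_iff_dvd (a - 1) s).mpr hse1
      push_cast at h5
      linear_combination h5
    · exact (ZMod.intCast_zmod_eq_zero_iff_dvd b s).mpr hsb
    · exact (ZMod.intCast_zmod_eq_zero_iff_dvd c s).mpr hsc
    · have h5 := (ZMod.intCast_zmod_eq_zero_iff_dvd (d - 1) s).mpr hsd
      push_cast at h5
      linear_combination h5
  | succ n IH =>
    intro e he hse A a b c d hA h1 hsb hsc hrb hrc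
    obtain ⟨f, hf⟩ := h1
    have hrm : (r : ℤ) ∣ (Q : ℤ) * (r : ℤ)^e :=
      Dvd.dvd.mul_left (dvd_pow_self (r : ℤ) (by omega)) _
    have hA' := coe_Del_mul A a b c d ((Q : ℤ) * (r : ℤ)^e) f hA
    -- abbreviations
    set m : ℤ := (Q : ℤ) * (r : ℤ)^e with hm
    set a' : ℤ := (1 - f*m)*a + f^2*m*c with ha'
    set b' : ℤ := (1 - f*m)*b + f^2*m*d with hb'
    set c' : ℤ := -(f*m^2)*a + (1 + f*m + f^2*m^2)*c with hc'
    set d' : ℤ := -(f*m^2)*b + (1 + f*m + f^2*m^2)*d with hd'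
    have ha'1 : a' - 1 = m * (f^2*(c - m)) := by
      rw [ha']; linear_combination (1 - f*m) * hf
    have h1' : ((Q : ℤ) * (r : ℤ)^(e+1)) ∣ a' - 1 := by
      rw [ha'1, show ((Q : ℤ) * (r : ℤ)^(e+1)) = m * (r:ℤ) by rw [hm]; ring]
      exact mul_dvd_mul_left m ((dvd_sub hrc hrm).mul_left (f^2))
    have hQd : (Q : ℤ) ∣ a' - 1 := by
      rw [ha'1, hm]; exact ⟨(r:ℤ)^e * (f^2*(c-m)), by ring⟩
    have hrd : (r : ℤ) ∣ a' - 1 := by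
      rw [ha'1]; exact hrm.mul_right _
    have hcop' : IsCoprime a' (s : ℤ) := by
      have c1 : IsCoprime a' ((r : ℤ)^s) := (isCoprime_of_dvd_sub_one hrd).pow_right
      have c4 : IsCoprime a' (P : ℤ) :=
        c1.of_isCoprime_of_dvd_right (by exact_mod_cast Int.natCast_dvd_natCast.mpr hPr)
      rw [hsPQ']
      exact c4.mul_right (isCoprime_of_dvd_sub_one hQd)
    have hrb' : (r : ℤ) ∣ b' := by
      rw [hb']
      exact dvd_add (hrb.mul_left _) ((hrm.mul_left (f^2)).mul_right d)
    have hrc' : (r : ℤ) ∣ c' := by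
      rw [hc']
      refine dvd_add ?_ (hrc.mul_left _)
      obtain ⟨t, ht⟩ := hrm
      exact ⟨-(f * (t * m) * a), by rw [show m^2 = m*m by ring]; nth_rewrite 1 [ht]; ring⟩
    have hBex := clean_step (s := s) hT (Del m f * A) a' b' c' d' hA' hrb' hrc' hcop'
    obtain ⟨B, b'', c'', d'', hB, hsb'', hsc'', hrb'', hrc'', hBiff⟩ := hBex
    have hBH : B ∈ H :=
      IH (e+1) (by omega) (by omega) B a' b'' c'' d'' hB h1' hsb'' hsc'' hrb'' hrc''
    have hA'H : Del m f * A ∈ H := hBiff.mp hBH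
    have hD : Del m f ∈ H := Del_mem hT f hrm
    have hAeq : A = (Del m f)⁻¹ * (Del m f * A) := by group
    rw [hAeq]
    exact H.mul_mem (H.inv_mem hD) hA'H
lemma gamma_r_le {r s : ℕ} {H : Subgroup SL2} (hr : 0 < r) (hs : 0 < s)
    (hT : ∀ g : SL2, g * ModularGroup.T ^ r * g⁻¹ ∈ H)
    (hGs : Gamma s ≤ H) : Gamma r ≤ H := by
  obtain ⟨P, Q, hsPQ, hQr, hPr⟩ := exists_split r s hs
  have hQ0 : 0 < Q := by
    rcases Nat.eq_zero_or_pos Q with h | h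
    · subst h; omega
    · exact h
  have hQne : (Q : ℤ) ≠ 0 := by exact_mod_cast hQ0.ne'
  have hsne : (s : ℤ) ≠ 0 := by exact_mod_cast hs.ne'
  intro A hA0
  rw [Gamma_mem] at hA0
  obtain ⟨a, b, c, d, hA⟩ : ∃ a b c d : ℤ, (A : Matrix (Fin 2) (Fin 2) ℤ) = !![a, b; c, d] :=
    ⟨_, _, _, _, Matrix.eta_fin_two _⟩
  have e00 : (A : Matrix (Fin 2) (Fin 2) ℤ) 0 0 = a := by rw [hA]; simp
  have e01 : (A : Matrix (Fin 2) (Fin 2) ℤ) 0 1 = b := by rw [hA]; simp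
  have e10 : (A : Matrix (Fin 2) (Fin 2) ℤ) 1 0 = c := by rw [hA]; simp
  have e11 : (A : Matrix (Fin 2) (Fin 2) ℤ) 1 1 = d := by rw [hA]; simp
  rw [e00, e01, e10, e11] at hA0
  have hra : (r : ℤ) ∣ a - 1 := by
    rw [← ZMod.intCast_zmod_eq_zero_iff_dvd]
    push_cast
    rw [hA0.1]; ring
  have hrb : (r : ℤ) ∣ b := (ZMod.intCast_zmod_eq_zero_iff_dvd b r).mp hA0.2.1
  have hrc : (r : ℤ) ∣ c := (ZMod.intCast_zmod_eq_zero_iff_dvd c r).mp hA0.2.2.1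
  have hdet : a * d - b * c = 1 := by
    have h2 := A.2
    rw [hA, Matrix.det_fin_two_of] at h2
    exact h2
  have hca : IsCoprime a c := ⟨d, -b, by linarith⟩
  have hcopr : IsCoprime a (r : ℤ) := isCoprime_of_dvd_sub_one hra
  -- Stage i: make top-left a unit mod Q
  obtain ⟨x, hx⟩ := exists_isCoprime_add a ((r:ℤ)*c) (Q:ℤ) hQne (hcopr.mul_right hca)
  have hA1 := coe_Uel_mul A a b c d ((r:ℤ)*x) hA
  set A₁ : SL2 := Uel ((r:ℤ)*x) * A with hA₁def
  set a₁ : ℤ := a + (r:ℤ)*x*c with ha₁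
  set b₁ : ℤ := b + (r:ℤ)*x*d with hb₁
  have hx₁ : IsCoprime a₁ (Q : ℤ) := by
    rw [ha₁, show a + (r:ℤ)*x*c = a + (r:ℤ)*c*x by ring]
    exact hx
  have hra₁ : (r:ℤ) ∣ a₁ - 1 := by
    rw [ha₁, show a + (r:ℤ)*x*c - 1 = (a - 1) + (r:ℤ)*(x*c) by ring]
    exact dvd_add hra (dvd_mul_right _ _)
  have hrb₁ : (r:ℤ) ∣ b₁ := by
    rw [hb₁, show b + (r:ℤ)*x*d = b + (r:ℤ)*(x*d) by ring]
    exact dvd_add hrb (dvd_mul_right _ _)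
  -- Stage ii
  obtain ⟨u₁, v₁, hbz1⟩ := hx₁
  obtain ⟨ru, rv, hbz2⟩ : IsCoprime (r : ℤ) (Q : ℤ) :=
    Nat.isCoprime_iff_coprime.mpr hQr.symm
  set w₀ : ℤ := 1 - a₁ with hw₀
  set y₀ : ℤ := (w₀ - c)*ru*u₁ with hy₀
  have hA2 := coe_Lel_mul A₁ a₁ b₁ c d ((r:ℤ)*y₀) hA1
  set A₂ : SL2 := Lel ((r:ℤ)*y₀) * A₁ with hA₂def
  set c₂ : ℤ := c + (r:ℤ)*y₀*a₁ with hc₂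
  set d₂ : ℤ := d + (r:ℤ)*y₀*b₁ with hd₂
  have hq1 : (Q:ℤ) ∣ 1 - u₁*a₁ := ⟨v₁, by linarith⟩
  have hq2 : (Q:ℤ) ∣ 1 - ru*(r:ℤ) := ⟨rv, by linarith⟩
  have hq3 : (Q:ℤ) ∣ 1 - (r:ℤ)*ru*u₁*a₁ := by
    have h5 : 1 - (r:ℤ)*ru*u₁*a₁ = (1 - ru*(r:ℤ)) + ru*(r:ℤ)*(1 - u₁*a₁) := by ring
    rw [h5]
    exact dvd_add hq2 (hq1.mul_left _)
  have hQc₂ : (Q:ℤ) ∣ c₂ - w₀ := by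
    have h5 : c₂ - w₀ = (c - w₀) * (1 - (r:ℤ)*ru*u₁*a₁) := by rw [hc₂, hy₀]; ring
    rw [h5]
    exact hq3.mul_left _
  have hrc₂ : (r:ℤ) ∣ c₂ := by
    rw [hc₂, show c + (r:ℤ)*y₀*a₁ = c + (r:ℤ)*(y₀*a₁) by ring]
    exact dvd_add hrc (dvd_mul_right _ _)
  have hrd₂' : True := trivial
  -- Stage iii
  have hA3 := coe_Uel_mul A₂ a₁ b₁ c₂ d₂ ((r:ℤ)*ru) hA2
  set A₃ : SL2 := Uel ((r:ℤ)*ru) * A₂ with hA₃def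
  set a₃ : ℤ := a₁ + (r:ℤ)*ru*c₂ with ha₃
  set b₃ : ℤ := b₁ + (r:ℤ)*ru*d₂ with hb₃
  have hQa₃ : (Q:ℤ) ∣ a₃ - 1 := by
    have h5 : a₃ - 1 = (-w₀)*(1 - ru*(r:ℤ)) + ((r:ℤ)*ru)*(c₂ - w₀) := by
      rw [ha₃, hw₀]; ring
    rw [h5]
    exact dvd_add (hq2.mul_left _) (hQc₂.mul_left _)
  have hra₃ : (r:ℤ) ∣ a₃ - 1 := by
    rw [show a₃ - 1 = (a₁ - 1) + (r:ℤ)*(ru*c₂) by rw [ha₃]; ring]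
    exact dvd_add hra₁ (dvd_mul_right _ _)
  have hrb₃ : (r:ℤ) ∣ b₃ := by
    rw [show b₃ = b₁ + (r:ℤ)*(ru*d₂) by rw [hb₃]; ring]
    exact dvd_add hrb₁ (dvd_mul_right _ _)
  have hdet₃ : a₃ * d₂ - b₃ * c₂ = 1 := by
    have h2 := A₃.2
    rw [hA3, Matrix.det_fin_two_of] at h2
    exact h2
  have hba₃ : IsCoprime a₃ b₃ := ⟨d₂, -c₂, by linarith⟩
  -- Stage iv : make coprime to s
  have hcop3 : IsCoprime a₃ (b₃*((r:ℤ)*(Q:ℤ))) :=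
    hba₃.mul_right ((isCoprime_of_dvd_sub_one hra₃).mul_right (isCoprime_of_dvd_sub_one hQa₃))
  obtain ⟨k, hk⟩ := exists_isCoprime_add a₃ (b₃*((r:ℤ)*(Q:ℤ))) (s:ℤ) hsne hcop3
  have hA4 := coe_mul_Lel A₃ a₃ b₃ c₂ d₂ ((r:ℤ)*((Q:ℤ)*k)) hA3
  set A₄ : SL2 := A₃ * Lel ((r:ℤ)*((Q:ℤ)*k)) with hA₄def
  set a₄ : ℤ := a₃ + b₃*((r:ℤ)*((Q:ℤ)*k)) with ha₄
  set c₄ : ℤ := c₂ + d₂*((r:ℤ)*((Q:ℤ)*k)) with hc₄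
  have hcop4 : IsCoprime a₄ (s:ℤ) := by
    rw [ha₄, show a₃ + b₃*((r:ℤ)*((Q:ℤ)*k)) = a₃ + b₃*((r:ℤ)*(Q:ℤ))*k by ring]
    exact hk
  have hQa₄ : (Q:ℤ) ∣ a₄ - 1 := by
    rw [ha₄, show a₃ + b₃*((r:ℤ)*((Q:ℤ)*k)) - 1 = (a₃ - 1) + (Q:ℤ)*(b₃*(r:ℤ)*k) by ring]
    exact dvd_add hQa₃ (dvd_mul_right _ _)
  have hra₄ : (r:ℤ) ∣ a₄ - 1 := by
    rw [ha₄, show a₃ + b₃*((r:ℤ)*((Q:ℤ)*k)) - 1 = (a₃ - 1) + (r:ℤ)*(b₃*(Q:ℤ)*k) by ring]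
    exact dvd_add hra₃ (dvd_mul_right _ _)
  have hrc₄ : (r:ℤ) ∣ c₄ := by
    rw [hc₄, show c₂ + d₂*((r:ℤ)*((Q:ℤ)*k)) = c₂ + (r:ℤ)*(d₂*(Q:ℤ)*k) by ring]
    exact dvd_add hrc₂ (dvd_mul_right _ _)
  -- Stage v : clean
  obtain ⟨B, b₅, c₅, d₅, hB, hsb₅, hsc₅, hrb₅, hrc₅, hBiff⟩ :=
    clean_step (s := s) hT A₄ a₄ b₃ c₄ d₂ hA4 hrb₃ hrc₄ hcop4
  have hQra₄ : ((Q:ℤ) * (r:ℤ)^1) ∣ a₄ - 1 := by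
    rw [pow_one]
    exact (Nat.isCoprime_iff_coprime.mpr hQr).mul_dvd hQa₄ hra₄
  have hBH : B ∈ H :=
    rec_step hr hs hT hGs P Q hsPQ hQr hPr s 1 (le_refl 1) (by omega)
      B a₄ b₅ c₅ d₅ hB hQra₄ hsb₅ hsc₅ hrb₅ hrc₅
  -- walk back
  have hA₄H : A₄ ∈ H := hBiff.mp hBH
  have hA₃H : A₃ ∈ H := by
    have h5 : A₃ = A₄ * (Lel ((r:ℤ)*((Q:ℤ)*k)))⁻¹ := by rw [hA₄def]; group
    rw [h5]
    exact H.mul_mem hA₄H (H.inv_mem (Lel_mem hT (dvd_mul_right _ _)))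
  have hA₂H : A₂ ∈ H := by
    have h5 : A₂ = (Uel ((r:ℤ)*ru))⁻¹ * A₃ := by rw [hA₃def]; group
    rw [h5]
    exact H.mul_mem (H.inv_mem (Uel_mem hT (dvd_mul_right _ _))) hA₃H
  have hA₁H : A₁ ∈ H := by
    have h5 : A₁ = (Lel ((r:ℤ)*y₀))⁻¹ * A₂ := by rw [hA₂def]; group
    rw [h5]
    exact H.mul_mem (H.inv_mem (Lel_mem hT (dvd_mul_right _ _))) hA₂H
  have h5 : A = (Uel ((r:ℤ)*x))⁻¹ * A₁ := by rw [hA₁def]; group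
  rw [h5]
  exact H.mul_mem (H.inv_mem (Uel_mem hT (dvd_mul_right _ _))) hA₁H

theorem stmt19 (K : Subgroup PSL2Z) (r s : ℕ)
    (hgeo : 0 < r ∧ (∀ g : PSL2Z, g * Tb ^ r * g⁻¹ ∈ K) ∧
      ∀ r' : ℕ, 0 < r' → (∀ g : PSL2Z, g * Tb ^ r' * g⁻¹ ∈ K) → r ≤ r')
    (halg : 0 < s ∧ GammaBar s ≤ K ∧ ∀ t : ℕ, 0 < t → GammaBar t ≤ K → s ∣ t) :
    r = s := by
  obtain ⟨hr, hTK, hgeomin⟩ := hgeo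
  obtain ⟨hs, hGsK, halgdvd⟩ := halg
  have hGsH : CongruenceSubgroup.Gamma s ≤ K.comap pr := Subgroup.map_le_iff_le_comap.mp hGsK
  have hTH : ∀ g : Matrix.SpecialLinearGroup (Fin 2) ℤ,
      g * ModularGroup.T ^ r * g⁻¹ ∈ K.comap pr := by
    intro g
    rw [Subgroup.mem_comap]
    have h5 : pr (g * ModularGroup.T ^ r * g⁻¹) = pr g * Tb ^ r * (pr g)⁻¹ := by
      rw [_root_.map_mul, _root_.map_mul, map_inv, map_pow]; rfl
    rw [h5]
    exact hTK (pr g)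
  have h2 : GammaBar r ≤ K := Subgroup.map_le_iff_le_comap.mpr (gamma_r_le hr hs hTH hGsH)
  have hsr : s ∣ r := halgdvd r hr h2
  have hrs : r ≤ s := by
    apply hgeomin s hs
    intro g
    obtain ⟨g₀, rfl⟩ := QuotientGroup.mk'_surjective Z g
    have hTs : ModularGroup.T ^ (s : ℕ) ∈ CongruenceSubgroup.Gamma s := by
      have h6 := CongruenceSubgroup.ModularGroup_T_pow_mem_Gamma (s : ℤ) (s : ℤ) dvd_rfl
      simpa [zpow_natCast] using h6
    have hconj : g₀ * ModularGroup.T ^ (s : ℕ) * g₀⁻¹ ∈ CongruenceSubgroup.Gamma s :=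
      (CongruenceSubgroup.Gamma_normal s).conj_mem _ hTs g₀
    have h7 : (QuotientGroup.mk' Z g₀) * Tb ^ s * (QuotientGroup.mk' Z g₀)⁻¹ =
        pr (g₀ * ModularGroup.T ^ s * g₀⁻¹) := by
      rw [_root_.map_mul, _root_.map_mul, map_inv, map_pow]; rfl
    rw [h7]
    exact hGsK (Subgroup.mem_map_of_mem pr hconj)
  exact Nat.le_antisymm hrs (Nat.le_of_dvd hr hsr)

end St19
end
end
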